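/- arXiv:2203.05350 — 3 statements merged into one kernel-verified Lean document; each statement's English description precedes it below -/
import Mathlib

section
/- For every q ∈ (0,1), every w ∈ ℂ with |w| < 1, and every integer m ≥ 1: (1 − q^m)(w;q)_m · Σ_{j=0}^∞ [ q^{(m+1)j} w^j / (1 − q^{j+m}) ] · Σ_{n=0}^∞ [ q^{(j+m+1)n} / (q^n w; q)_{m+1} ] = Σ_{j=0}^∞ q^{mj} w^j / (1 − q^{j+m+1}), with all series converging absolutely. -/
open scoped BigOperators

/-- The q-Pochhammer symbol `(w;q)_r = ∏_{i=0}^{r−1} (1 − q^i w)` (complex version). -/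
noncomputable def qPC (q w : ℂ) (r : ℕ) : ℂ := ∏ i ∈ Finset.range r, (1 - q ^ i * w)

lemma qPC_succ (q w : ℂ) (r : ℕ) : qPC q w (r+1) = qPC q w r * (1 - q ^ r * w) :=
  Finset.prod_range_succ _ _

lemma qPC_succ' (q w : ℂ) (r : ℕ) : qPC q w (r+1) = (1 - w) * qPC q (q*w) r := by
  rw [qPC, Finset.prod_range_succ']
  have h0 : (1 - q^(0:ℕ)*w) = 1 - w := by norm_num
  rw [h0, mul_comm]
  congr 1
  rw [qPC]
  apply Finset.prod_congr rfl
  intro i _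
  ring

lemma one_sub_ne_of_norm_lt {y : ℂ} (h : ‖y‖ < 1) : (1 : ℂ) - y ≠ 0 := by
  intro h0
  rw [sub_eq_zero] at h0
  rw [← h0] at h
  simp at h

lemma qPC_norm_lower (Q x : ℂ) (hQ : ‖Q‖ ≤ 1) {s : ℝ} (hx : ‖x‖ ≤ s) (hs : s ≤ 1) (r : ℕ) :
    (1 - s) ^ r ≤ ‖qPC Q x r‖ := by
  induction r with
  | zero => simp [qPC]
  | succ n ih =>
    rw [qPC_succ, norm_mul, pow_succ]
    have hy : ‖Q ^ n * x‖ ≤ s := by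
      rw [norm_mul, norm_pow]
      calc ‖Q‖^n * ‖x‖ ≤ 1 * s := by
            apply mul_le_mul (pow_le_one₀ (norm_nonneg _) hQ) hx (norm_nonneg _) zero_le_one
        _ = s := one_mul s
    have h2 : 1 - s ≤ ‖1 - Q ^ n * x‖ := by
      calc 1 - s ≤ 1 - ‖Q^n * x‖ := by linarith
        _ = ‖(1:ℂ)‖ - ‖Q^n*x‖ := by rw [norm_one]
        _ ≤ ‖1 - Q^n*x‖ := norm_sub_norm_le _ _
    exact mul_le_mul ih h2 (by linarith) (norm_nonneg _)

lemma qPC_norm_upper (Q x : ℂ) (hQ : ‖Q‖ ≤ 1) (hx : ‖x‖ ≤ 1) (r : ℕ) :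
    ‖qPC Q x r‖ ≤ 2 ^ r := by
  induction r with
  | zero => simp [qPC]
  | succ n ih =>
    rw [qPC_succ, norm_mul, pow_succ]
    have hy : ‖Q ^ n * x‖ ≤ 1 := by
      rw [norm_mul, norm_pow]
      calc ‖Q‖^n * ‖x‖ ≤ 1 * 1 := by
            apply mul_le_mul (pow_le_one₀ (norm_nonneg _) hQ) hx (norm_nonneg _) zero_le_one
        _ = 1 := one_mul 1
    have h2 : ‖1 - Q ^ n * x‖ ≤ 2 := by
      calc ‖1 - Q^n*x‖ ≤ ‖(1:ℂ)‖ + ‖Q^n*x‖ := norm_sub_le _ _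
        _ = 1 + ‖Q^n*x‖ := by rw [norm_one]
        _ ≤ 1 + 1 := by linarith
        _ = 2 := by norm_num
    exact mul_le_mul ih h2 (norm_nonneg _) (by positivity)

lemma tele_gen (Q x : ℂ) (m : ℕ) (hA : qPC Q x m ≠ 0) (hB : qPC Q (Q*x) m ≠ 0)
    (hP : qPC Q x (m+1) ≠ 0) :
    (qPC Q x m)⁻¹ - (qPC Q (Q*x) m)⁻¹ = (1 - Q^m) * x / qPC Q x (m+1) := by
  have e1 : (qPC Q x m)⁻¹ * qPC Q x (m+1) = 1 - Q^m*x := by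
    rw [qPC_succ, inv_mul_cancel_left₀ hA]
  have e2 : (qPC Q (Q*x) m)⁻¹ * qPC Q x (m+1) = 1 - x := by
    rw [qPC_succ', mul_comm (1-x), inv_mul_cancel_left₀ hB]
  rw [eq_div_iff hP, sub_mul, e1, e2]; ring

lemma tele2_gen (Q x : ℂ) (m : ℕ) (hA : qPC Q x m ≠ 0) (hB : qPC Q (Q*x) m ≠ 0)
    (hP : qPC Q x (m+1) ≠ 0) :
    (qPC Q x m)⁻¹ - Q^m * (qPC Q (Q*x) m)⁻¹ = (1 - Q^m) * (qPC Q x (m+1))⁻¹ := by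
  have e1 : (qPC Q x m)⁻¹ * qPC Q x (m+1) = 1 - Q^m*x := by
    rw [qPC_succ, inv_mul_cancel_left₀ hA]
  have e2 : (qPC Q (Q*x) m)⁻¹ * qPC Q x (m+1) = 1 - x := by
    rw [qPC_succ', mul_comm (1-x), inv_mul_cancel_left₀ hB]
  refine mul_right_cancel₀ hP ?_
  rw [sub_mul, e1, mul_assoc (Q^m), e2, mul_assoc (1-Q^m), inv_mul_cancel₀ hP]
  ring

open Filter Topology

set_option maxHeartbeats 1600000 in
/-- For `q ∈ (0,1)`, `|w| < 1`, `m ≥ 1`: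
`(1 − q^m)(w;q)_m Σ_j [q^{(m+1)j} w^j/(1 − q^{j+m})] Σ_n [q^{(j+m+1)n}/(q^n w;q)_{m+1}]
  = Σ_j q^{mj} w^j/(1 − q^{j+m+1})`, with all series converging absolutely. -/
theorem statement11 (q : ℝ) (hq : q ∈ Set.Ioo (0 : ℝ) 1)
    (w : ℂ) (hw : ‖w‖ < 1) (m : ℕ) (hm : 1 ≤ m) :
    (∀ j : ℕ, Summable (fun n : ℕ =>
      ‖(q : ℂ) ^ ((j + m + 1) * n) / qPC (q : ℂ) ((q : ℂ) ^ n * w) (m + 1)‖)) ∧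
    Summable (fun j : ℕ =>
      ‖(q : ℂ) ^ ((m + 1) * j) * w ^ j / (1 - (q : ℂ) ^ (j + m)) *
        ∑' n : ℕ, (q : ℂ) ^ ((j + m + 1) * n) / qPC (q : ℂ) ((q : ℂ) ^ n * w) (m + 1)‖) ∧
    Summable (fun j : ℕ => ‖(q : ℂ) ^ (m * j) * w ^ j / (1 - (q : ℂ) ^ (j + m + 1))‖) ∧
    (1 - (q : ℂ) ^ m) * qPC (q : ℂ) w m *
      ∑' j : ℕ, (q : ℂ) ^ ((m + 1) * j) * w ^ j / (1 - (q : ℂ) ^ (j + m)) *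
        ∑' n : ℕ, (q : ℂ) ^ ((j + m + 1) * n) / qPC (q : ℂ) ((q : ℂ) ^ n * w) (m + 1)
      = ∑' j : ℕ, (q : ℂ) ^ (m * j) * w ^ j / (1 - (q : ℂ) ^ (j + m + 1)) := by
  obtain ⟨hq0, hq1⟩ := hq
  set Q : ℂ := (q:ℂ) with hQdef
  have hQn : ‖Q‖ = q := by rw [hQdef, Complex.norm_real, Real.norm_eq_abs, abs_of_pos hq0]
  have hQle : ‖Q‖ ≤ 1 := by rw [hQn]; linarith
  set s : ℝ := ‖w‖ with hsdef
  have hs0 : 0 ≤ s := norm_nonneg w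
  have hs1 : s < 1 := hw
  have hs' : 0 < 1 - s := by linarith
  have hq01 : 0 ≤ q := hq0.le
  have hq1' : q ≤ 1 := hq1.le
  have hq' : 0 < 1 - q := by linarith
  have hQpow : ∀ k : ℕ, ‖Q^k‖ = q^k := fun k => by rw [norm_pow, hQn]
  have hxle : ∀ n : ℕ, ‖Q^n * w‖ ≤ s := by
    intro n
    rw [norm_mul, hQpow, ← hsdef]
    calc q^n * s ≤ 1*s := mul_le_mul_of_nonneg_right (pow_le_one₀ hq01 hq1') hs0
      _ = s := one_mul s
  have hlow : ∀ (n r : ℕ), (1-s)^r ≤ ‖qPC Q (Q^n*w) r‖ :=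
    fun n r => qPC_norm_lower Q _ hQle (hxle n) hs1.le r
  have hne : ∀ (n r : ℕ), qPC Q (Q^n*w) r ≠ 0 := by
    intro n r h
    have h2 := hlow n r
    rw [h, norm_zero] at h2
    nlinarith [pow_pos hs' r]
  have hinv : ∀ (n r : ℕ), ‖(qPC Q (Q^n*w) r)⁻¹‖ ≤ ((1-s)^r)⁻¹ := by
    intro n r
    rw [norm_inv]
    exact inv_anti₀ (pow_pos hs' r) (hlow n r)
  have hqk : ∀ k : ℕ, 1 ≤ k → q^k ≤ q := by
    intro k hk
    calc q^k ≤ q^1 := pow_le_pow_of_le_one hq01 hq1' hk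
      _ = q := pow_one q
  have hdenn : ∀ k : ℕ, 1 ≤ k → 1 - q ≤ ‖(1:ℂ) - Q^k‖ := by
    intro k hk
    calc 1 - q ≤ 1 - q^k := by have := hqk k hk; linarith
      _ = ‖(1:ℂ)‖ - ‖Q^k‖ := by rw [norm_one, hQpow]
      _ ≤ ‖(1:ℂ) - Q^k‖ := norm_sub_norm_le _ _
  have hden : ∀ k : ℕ, 1 ≤ k → (1:ℂ) - Q^k ≠ 0 := by
    intro k hk
    apply one_sub_ne_of_norm_lt
    rw [hQpow]
    calc q^k ≤ q := hqk k hk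
      _ < 1 := hq1
  have hdinv : ∀ k : ℕ, 1 ≤ k → ‖((1:ℂ) - Q^k)⁻¹‖ ≤ (1-q)⁻¹ := by
    intro k hk
    rw [norm_inv]
    exact inv_anti₀ hq' (hdenn k hk)
  have keyS : ∀ (f : ℕ → ℂ) (C r : ℝ), 0 ≤ r → r < 1 → (∀ n, ‖f n‖ ≤ C * r^n) →
      Summable (fun n => ‖f n‖) := by
    intro f C r h0 h1 hb
    exact Summable.of_nonneg_of_le (fun n => norm_nonneg _) hb
      ((summable_geometric_of_lt_one h0 h1).mul_left C)
  -- Part 1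
  have part1 : ∀ j : ℕ, Summable (fun n : ℕ =>
      ‖Q ^ ((j + m + 1) * n) / qPC Q (Q ^ n * w) (m + 1)‖) := by
    intro j
    apply keyS _ (((1-s)^(m+1))⁻¹) q hq01 hq1
    intro n
    rw [norm_div, div_eq_mul_inv, hQpow, mul_comm (((1-s)^(m+1))⁻¹)]
    apply mul_le_mul
    · exact pow_le_pow_of_le_one hq01 hq1' (Nat.le_mul_of_pos_left n (by omega))
    · rw [← norm_inv]; exact hinv n (m+1)
    · positivity
    · positivity
  -- bound on inner sums
  have hGb : ∀ j : ℕ, ‖∑' n : ℕ, Q ^ ((j + m + 1) * n) / qPC Q (Q ^ n * w) (m + 1)‖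
      ≤ ((1-s)^(m+1))⁻¹ * (1-q)⁻¹ := by
    intro j
    calc ‖∑' n : ℕ, Q ^ ((j + m + 1) * n) / qPC Q (Q ^ n * w) (m + 1)‖
        ≤ ∑' n : ℕ, ‖Q ^ ((j + m + 1) * n) / qPC Q (Q ^ n * w) (m + 1)‖ :=
          norm_tsum_le_tsum_norm (part1 j)
      _ ≤ ∑' n : ℕ, ((1-s)^(m+1))⁻¹ * q^n := by
          apply Summable.tsum_le_tsum _ (part1 j) ((summable_geometric_of_lt_one hq01 hq1).mul_left _)
          intro n
          rw [norm_div, div_eq_mul_inv, hQpow, mul_comm (((1-s)^(m+1))⁻¹)]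
          apply mul_le_mul
          · exact pow_le_pow_of_le_one hq01 hq1' (Nat.le_mul_of_pos_left n (by omega))
          · rw [← norm_inv]; exact hinv n (m+1)
          · positivity
          · positivity
      _ = ((1-s)^(m+1))⁻¹ * ∑' n : ℕ, q^n := tsum_mul_left
      _ = ((1-s)^(m+1))⁻¹ * (1-q)⁻¹ := by rw [tsum_geometric_of_lt_one hq01 hq1]
  -- Part 2
  have hqs : q * s < 1 := by nlinarith
  have hqs0 : 0 ≤ q * s := by positivity
  have part2 : Summable (fun j : ℕ =>
      ‖Q ^ ((m + 1) * j) * w ^ j / (1 - Q ^ (j + m)) *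
        ∑' n : ℕ, Q ^ ((j + m + 1) * n) / qPC Q (Q ^ n * w) (m + 1)‖) := by
    apply keyS _ ((1-q)⁻¹ * (((1-s)^(m+1))⁻¹ * (1-q)⁻¹)) (q*s) hqs0 hqs
    intro j
    rw [norm_mul]
    have h1 : ‖Q ^ ((m + 1) * j) * w ^ j / (1 - Q ^ (j + m))‖ ≤ (1-q)⁻¹ * (q*s)^j := by
      rw [norm_div, norm_mul, div_eq_mul_inv, hQpow, norm_pow, ← hsdef, mul_pow,
        mul_comm ((1-q)⁻¹)]
      apply mul_le_mul
      · apply mul_le_mul _ le_rfl (by positivity) (by positivity)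
        exact pow_le_pow_of_le_one hq01 hq1' (Nat.le_mul_of_pos_left j (by omega))
      · rw [← norm_inv]; exact hdinv (j+m) (by omega)
      · positivity
      · positivity
    calc ‖Q ^ ((m + 1) * j) * w ^ j / (1 - Q ^ (j + m))‖ *
          ‖∑' n : ℕ, Q ^ ((j + m + 1) * n) / qPC Q (Q ^ n * w) (m + 1)‖
        ≤ ((1-q)⁻¹ * (q*s)^j) * (((1-s)^(m+1))⁻¹ * (1-q)⁻¹) :=
          mul_le_mul h1 (hGb j) (norm_nonneg _) (by positivity)
      _ = (1-q)⁻¹ * (((1-s)^(m+1))⁻¹ * (1-q)⁻¹) * (q*s)^j := by ring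
  -- Part 3
  have part3 : Summable (fun j : ℕ => ‖Q ^ (m * j) * w ^ j / (1 - Q ^ (j + m + 1))‖) := by
    apply keyS _ ((1-q)⁻¹) (q*s) hqs0 hqs
    intro j
    rw [norm_div, norm_mul, div_eq_mul_inv, hQpow, norm_pow, ← hsdef, mul_comm ((1-q)⁻¹), mul_pow]
    apply mul_le_mul
    · apply mul_le_mul _ le_rfl (by positivity) (by positivity)
      exact pow_le_pow_of_le_one hq01 hq1' (Nat.le_mul_of_pos_left j (by omega))
    · rw [← norm_inv]; exact hdinv (j+m+1) (by omega)
    · positivity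
    · positivity
  refine ⟨part1, part2, part3, ?_⟩
  have h00 : Q^(0:ℕ)*w = w := by rw [pow_zero, one_mul]
  rcases eq_or_ne w 0 with rfl | hw0
  · -- w = 0 case
    have hpc1 : ∀ r : ℕ, qPC Q 0 r = 1 := by
      intro r
      rw [qPC]
      apply Finset.prod_eq_one
      intro i _
      rw [mul_zero, sub_zero]
    have hinner : ∀ j : ℕ, (∑' n : ℕ, Q ^ ((j + m + 1) * n) / qPC Q (Q ^ n * 0) (m + 1))
        = (1 - Q^(j+m+1))⁻¹ := by
      intro j
      have : ∀ n : ℕ, Q ^ ((j + m + 1) * n) / qPC Q (Q ^ n * 0) (m + 1)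
          = (Q^(j+m+1))^n := by
        intro n
        rw [mul_zero, hpc1, div_one, pow_mul]
      rw [tsum_congr this]
      apply tsum_geometric_of_norm_lt_one
      rw [hQpow]
      calc q^(j+m+1) ≤ q := hqk _ (by omega)
        _ < 1 := hq1
    have hL : (∑' j : ℕ, Q ^ ((m + 1) * j) * (0:ℂ) ^ j / (1 - Q ^ (j + m)) *
        ∑' n : ℕ, Q ^ ((j + m + 1) * n) / qPC Q (Q ^ n * 0) (m + 1))
        = (1 - Q^m)⁻¹ * (1 - Q^(m+1))⁻¹ := by
      rw [tsum_eq_single 0]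
      · rw [hinner 0]
        norm_num
      · intro j hj
        rw [zero_pow hj, mul_zero, zero_div, zero_mul]
    have hR : (∑' j : ℕ, Q ^ (m * j) * (0:ℂ) ^ j / (1 - Q ^ (j + m + 1)))
        = (1 - Q^(m+1))⁻¹ := by
      rw [tsum_eq_single 0]
      · norm_num
      · intro j hj
        rw [zero_pow hj, mul_zero, zero_div]
    rw [hL, hR, hpc1]
    rw [mul_one, ← mul_assoc, mul_inv_cancel₀ (hden m hm), one_mul]
  · -- w ≠ 0 case
    have hQWm : qPC Q w m ≠ 0 := by have := hne 0 m; rwa [h00] at this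
    have hmw : (1:ℂ) - Q^m*w ≠ 0 := by
      apply one_sub_ne_of_norm_lt
      exact lt_of_le_of_lt (hxle m) hs1
    -- summability of weighted inverse-qPC sequences
    have sumv : ∀ (c : ℕ), 1 ≤ c → Summable (fun n : ℕ => Q^(c*n) * (qPC Q (Q^n*w) m)⁻¹) := by
      intro c hc
      apply Summable.of_norm
      apply keyS _ (((1-s)^m)⁻¹) q hq01 hq1
      intro n
      rw [norm_mul, hQpow, mul_comm (((1-s)^m)⁻¹)]
      apply mul_le_mul
      · exact pow_le_pow_of_le_one hq01 hq1' (Nat.le_mul_of_pos_left n (by omega))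
      · exact hinv n m
      · exact norm_nonneg _
      · positivity
    have sumv' : ∀ (c : ℕ), 1 ≤ c → Summable (fun n : ℕ => Q^(c*n) * (qPC Q (Q^(n+1)*w) m)⁻¹) := by
      intro c hc
      apply Summable.of_norm
      apply keyS _ (((1-s)^m)⁻¹) q hq01 hq1
      intro n
      rw [norm_mul, hQpow, mul_comm (((1-s)^m)⁻¹)]
      apply mul_le_mul
      · exact pow_le_pow_of_le_one hq01 hq1' (Nat.le_mul_of_pos_left n (by omega))
      · exact hinv (n+1) m
      · exact norm_nonneg _
      · positivity
    -- Step 1 : inner Abel summation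
    have step1 : ∀ j : ℕ,
        (1-Q^m) * w * (∑' n : ℕ, Q ^ ((j + m + 1) * n) / qPC Q (Q ^ n * w) (m + 1))
        = (qPC Q w m)⁻¹ - (1 - Q^(j+m)) * ∑' n : ℕ, Q^((j+m)*n) * (qPC Q (Q^(n+1)*w) m)⁻¹ := by
      intro j
      have hc : 1 ≤ j + m := by omega
      calc (1-Q^m) * w * (∑' n : ℕ, Q ^ ((j + m + 1) * n) / qPC Q (Q ^ n * w) (m + 1))
          = ∑' n : ℕ, (1-Q^m) * w * (Q ^ ((j + m + 1) * n) / qPC Q (Q ^ n * w) (m + 1)) :=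
            tsum_mul_left.symm
        _ = ∑' n : ℕ, (Q^((j+m)*n) * (qPC Q (Q^n*w) m)⁻¹ - Q^((j+m)*n) * (qPC Q (Q^(n+1)*w) m)⁻¹) := by
            apply tsum_congr
            intro n
            have harg : Q*(Q^n*w) = Q^(n+1)*w := by ring
            have hB : qPC Q (Q*(Q^n*w)) m ≠ 0 := by rw [harg]; exact hne (n+1) m
            have ht := tele_gen Q (Q^n*w) m (hne n m) hB (hne n (m+1))
            rw [harg] at ht
            rw [← mul_sub, ht, show (j+m+1)*n = (j+m)*n + n from by ring, pow_add]
            ring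
        _ = (∑' n : ℕ, Q^((j+m)*n) * (qPC Q (Q^n*w) m)⁻¹)
            - ∑' n : ℕ, Q^((j+m)*n) * (qPC Q (Q^(n+1)*w) m)⁻¹ :=
            Summable.tsum_sub (sumv _ hc) (sumv' _ hc)
        _ = (Q^((j+m)*0) * (qPC Q (Q^(0:ℕ)*w) m)⁻¹
              + ∑' n : ℕ, Q^((j+m)*(n+1)) * (qPC Q (Q^(n+1)*w) m)⁻¹)
            - ∑' n : ℕ, Q^((j+m)*n) * (qPC Q (Q^(n+1)*w) m)⁻¹ := by
            rw [Summable.tsum_eq_zero_add (sumv _ hc)]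
        _ = (qPC Q w m)⁻¹ - (1 - Q^(j+m)) * ∑' n : ℕ, Q^((j+m)*n) * (qPC Q (Q^(n+1)*w) m)⁻¹ := by
            rw [h00, Nat.mul_zero, pow_zero, one_mul]
            have hre : ∑' n : ℕ, Q^((j+m)*(n+1)) * (qPC Q (Q^(n+1)*w) m)⁻¹
                = Q^(j+m) * ∑' n : ℕ, Q^((j+m)*n) * (qPC Q (Q^(n+1)*w) m)⁻¹ := by
              rw [← tsum_mul_left]
              apply tsum_congr
              intro n
              rw [show (j+m)*(n+1) = (j+m) + (j+m)*n from by ring, pow_add]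
              ring
            rw [hre]
            ring
    -- summability of f1
    have sumf1 : Summable (fun j : ℕ => Q^((m+1)*j) * w^j / (1 - Q^(j+m))) := by
      apply Summable.of_norm
      apply keyS _ ((1-q)⁻¹) (q*s) hqs0 hqs
      intro j
      rw [norm_div, norm_mul, div_eq_mul_inv, hQpow, norm_pow, ← hsdef,
        mul_comm ((1-q)⁻¹), mul_pow]
      apply mul_le_mul
      · apply mul_le_mul _ le_rfl (by positivity) (by positivity)
        exact pow_le_pow_of_le_one hq01 hq1' (Nat.le_mul_of_pos_left j (by omega))
      · rw [← norm_inv]; exact hdinv (j+m) (by omega)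
      · positivity
      · positivity
    -- bound on S j
    have hSb : ∀ j : ℕ, ‖∑' n : ℕ, Q^((j+m)*n) * (qPC Q (Q^(n+1)*w) m)⁻¹‖
        ≤ ((1-s)^m)⁻¹ * (1-q)⁻¹ := by
      intro j
      have hsum := (sumv' (j+m) (by omega)).norm
      calc ‖∑' n : ℕ, Q^((j+m)*n) * (qPC Q (Q^(n+1)*w) m)⁻¹‖
          ≤ ∑' n : ℕ, ‖Q^((j+m)*n) * (qPC Q (Q^(n+1)*w) m)⁻¹‖ :=
            norm_tsum_le_tsum_norm hsum
        _ ≤ ∑' n : ℕ, ((1-s)^m)⁻¹ * q^n := by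
            apply Summable.tsum_le_tsum _ hsum ((summable_geometric_of_lt_one hq01 hq1).mul_left _)
            intro n
            rw [norm_mul, hQpow, mul_comm (((1-s)^m)⁻¹)]
            apply mul_le_mul
            · exact pow_le_pow_of_le_one hq01 hq1' (Nat.le_mul_of_pos_left n (by omega))
            · exact hinv (n+1) m
            · exact norm_nonneg _
            · positivity
        _ = ((1-s)^m)⁻¹ * ∑' n : ℕ, q^n := tsum_mul_left
        _ = ((1-s)^m)⁻¹ * (1-q)⁻¹ := by rw [tsum_geometric_of_lt_one hq01 hq1]
    -- summability of f2
    have sumf2 : Summable (fun j : ℕ => qPC Q w m * (Q^((m+1)*j) * w^j) *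
        (∑' n : ℕ, Q^((j+m)*n) * (qPC Q (Q^(n+1)*w) m)⁻¹)) := by
      apply Summable.of_norm
      apply keyS _ ((2:ℝ)^m * (((1-s)^m)⁻¹ * (1-q)⁻¹)) (q*s) hqs0 hqs
      intro j
      rw [norm_mul, norm_mul]
      have hb1 : ‖qPC Q w m‖ ≤ 2^m := qPC_norm_upper Q w hQle hs1.le m
      have hb2 : ‖Q^((m+1)*j) * w^j‖ ≤ (q*s)^j := by
        rw [norm_mul, hQpow, norm_pow, ← hsdef, mul_pow]
        apply mul_le_mul _ le_rfl (by positivity) (by positivity)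
        exact pow_le_pow_of_le_one hq01 hq1' (Nat.le_mul_of_pos_left j (by omega))
      calc ‖qPC Q w m‖ * ‖Q^((m+1)*j) * w^j‖ * ‖∑' n : ℕ, Q^((j+m)*n) * (qPC Q (Q^(n+1)*w) m)⁻¹‖
          ≤ (2^m * (q*s)^j) * (((1-s)^m)⁻¹ * (1-q)⁻¹) := by
            apply mul_le_mul _ (hSb j) (norm_nonneg _) (by positivity)
            exact mul_le_mul hb1 hb2 (norm_nonneg _) (by positivity)
        _ = (2:ℝ)^m * (((1-s)^m)⁻¹ * (1-q)⁻¹) * (q*s)^j := by ring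
    -- Key expansion of the left-hand side
    have keyEq : w * ((1 - Q^m) * qPC Q w m *
          ∑' j : ℕ, Q ^ ((m + 1) * j) * w ^ j / (1 - Q ^ (j + m)) *
            ∑' n : ℕ, Q ^ ((j + m + 1) * n) / qPC Q (Q ^ n * w) (m + 1))
        = (∑' j : ℕ, Q^((m+1)*j) * w^j / (1 - Q^(j+m)))
          - qPC Q w m * ∑' j : ℕ, (Q^((m+1)*j) * w^j) *
              (∑' n : ℕ, Q^((j+m)*n) * (qPC Q (Q^(n+1)*w) m)⁻¹) := by
      rw [show w * ((1 - Q^m) * qPC Q w m *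
          ∑' j : ℕ, Q ^ ((m + 1) * j) * w ^ j / (1 - Q ^ (j + m)) *
            ∑' n : ℕ, Q ^ ((j + m + 1) * n) / qPC Q (Q ^ n * w) (m + 1))
        = (qPC Q w m * ((1-Q^m)*w)) *
          ∑' j : ℕ, Q ^ ((m + 1) * j) * w ^ j / (1 - Q ^ (j + m)) *
            ∑' n : ℕ, Q ^ ((j + m + 1) * n) / qPC Q (Q ^ n * w) (m + 1) from by ring]
      rw [← tsum_mul_left]
      have hptw : ∀ j : ℕ, (qPC Q w m * ((1-Q^m)*w)) *
            (Q ^ ((m + 1) * j) * w ^ j / (1 - Q ^ (j + m)) *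
              ∑' n : ℕ, Q ^ ((j + m + 1) * n) / qPC Q (Q ^ n * w) (m + 1))
          = Q^((m+1)*j) * w^j / (1 - Q^(j+m))
            - qPC Q w m * (Q^((m+1)*j) * w^j) *
                (∑' n : ℕ, Q^((j+m)*n) * (qPC Q (Q^(n+1)*w) m)⁻¹) := by
        intro j
        have hst := step1 j
        calc (qPC Q w m * ((1-Q^m)*w)) *
              (Q ^ ((m + 1) * j) * w ^ j / (1 - Q ^ (j + m)) *
                ∑' n : ℕ, Q ^ ((j + m + 1) * n) / qPC Q (Q ^ n * w) (m + 1))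
            = (qPC Q w m * (Q ^ ((m + 1) * j) * w ^ j / (1 - Q ^ (j + m)))) *
              ((1-Q^m) * w * ∑' n : ℕ, Q ^ ((j + m + 1) * n) / qPC Q (Q ^ n * w) (m + 1)) := by
              ring
          _ = (qPC Q w m * (Q ^ ((m + 1) * j) * w ^ j / (1 - Q ^ (j + m)))) *
              ((qPC Q w m)⁻¹ - (1 - Q^(j+m)) * ∑' n : ℕ, Q^((j+m)*n) * (qPC Q (Q^(n+1)*w) m)⁻¹) := by
              rw [hst]
          _ = Q^((m+1)*j) * w^j / (1 - Q^(j+m))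
              - qPC Q w m * (Q^((m+1)*j) * w^j) *
                  (∑' n : ℕ, Q^((j+m)*n) * (qPC Q (Q^(n+1)*w) m)⁻¹) := by
              rw [mul_sub]
              congr 1
              · rw [show qPC Q w m * (Q ^ ((m + 1) * j) * w ^ j / (1 - Q ^ (j + m))) * (qPC Q w m)⁻¹
                  = (qPC Q w m * (qPC Q w m)⁻¹) * (Q ^ ((m + 1) * j) * w ^ j / (1 - Q ^ (j + m)))
                  from by ring, mul_inv_cancel₀ hQWm, one_mul]
              · rw [show qPC Q w m * (Q ^ ((m + 1) * j) * w ^ j / (1 - Q ^ (j + m))) *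
                    ((1 - Q^(j+m)) * ∑' n : ℕ, Q^((j+m)*n) * (qPC Q (Q^(n+1)*w) m)⁻¹)
                  = qPC Q w m * (Q ^ ((m + 1) * j) * w ^ j / (1 - Q ^ (j + m)) * (1 - Q^(j+m))) *
                    (∑' n : ℕ, Q^((j+m)*n) * (qPC Q (Q^(n+1)*w) m)⁻¹) from by ring,
                  div_mul_cancel₀ _ (hden (j+m) (by omega))]
      rw [tsum_congr hptw, Summable.tsum_sub sumf1 sumf2, ← tsum_mul_left]
      congr 1
      apply tsum_congr
      intro j
      ring
    -- swap the double sum and evaluate the geometric j-sum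
    have hqm1 : q^m < 1 := by
      calc q^m ≤ q := hqk m hm
        _ < 1 := hq1
    have husum : Summable (Function.uncurry (fun j n : ℕ =>
        (Q^((m+1)*j) * w^j) * (Q^((j+m)*n) * (qPC Q (Q^(n+1)*w) m)⁻¹))) := by
      apply Summable.of_norm_bounded
        (g := fun p : ℕ × ℕ => (((1-s)^m)⁻¹ * (q*s)^p.1) * (q^m)^p.2)
      · exact Summable.mul_of_nonneg
          ((summable_geometric_of_lt_one hqs0 hqs).mul_left _)
          (summable_geometric_of_lt_one (by positivity) hqm1)
          (fun j => by positivity) (fun n => by positivity)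
      · rintro ⟨j, n⟩
        simp only [Function.uncurry]
        rw [norm_mul, norm_mul, norm_mul, hQpow, hQpow, norm_pow, ← hsdef]
        calc q^((m+1)*j) * s^j * (q^((j+m)*n) * ‖(qPC Q (Q^(n+1)*w) m)⁻¹‖)
            ≤ q^j * s^j * (q^(m*n) * ((1-s)^m)⁻¹) := by
              apply mul_le_mul
              · apply mul_le_mul _ le_rfl (by positivity) (by positivity)
                exact pow_le_pow_of_le_one hq01 hq1' (Nat.le_mul_of_pos_left j (by omega))
              · apply mul_le_mul _ (hinv (n+1) m) (norm_nonneg _) (by positivity)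
                exact pow_le_pow_of_le_one hq01 hq1' (Nat.mul_le_mul_right n (by omega))
              · positivity
              · positivity
          _ = ((1-s)^m)⁻¹ * (q*s)^j * (q^m)^n := by
              rw [mul_pow, ← pow_mul]
              ring
    have hswap : (∑' j : ℕ, (Q^((m+1)*j) * w^j) *
          (∑' n : ℕ, Q^((j+m)*n) * (qPC Q (Q^(n+1)*w) m)⁻¹))
        = ∑' n : ℕ, Q^(m*n) * (qPC Q (Q^(n+1)*w) (m+1))⁻¹ := by
      have h1 : ∀ j : ℕ, (Q^((m+1)*j) * w^j) *
            (∑' n : ℕ, Q^((j+m)*n) * (qPC Q (Q^(n+1)*w) m)⁻¹)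
          = ∑' n : ℕ, (Q^((m+1)*j) * w^j) * (Q^((j+m)*n) * (qPC Q (Q^(n+1)*w) m)⁻¹) :=
        fun j => tsum_mul_left.symm
      rw [tsum_congr h1]
      rw [← Summable.tsum_comm' husum (Summable.prod_factor husum) (Summable.prod_factor (Summable.prod_symm husum))]
      apply tsum_congr
      intro n
      have hgeo : ‖Q^(m+1+n)*w‖ < 1 := lt_of_le_of_lt (hxle (m+1+n)) hs1
      have h2 : ∀ j : ℕ, (Q^((m+1)*j) * w^j) * (Q^((j+m)*n) * (qPC Q (Q^(n+1)*w) m)⁻¹)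
          = (Q^(m*n) * (qPC Q (Q^(n+1)*w) m)⁻¹) * (Q^(m+1+n)*w)^j := by
        intro j
        have he : (m+1)*j + (j+m)*n = m*n + (m+1+n)*j := by ring
        calc (Q^((m+1)*j) * w^j) * (Q^((j+m)*n) * (qPC Q (Q^(n+1)*w) m)⁻¹)
            = Q^((m+1)*j + (j+m)*n) * (w^j * (qPC Q (Q^(n+1)*w) m)⁻¹) := by
              rw [pow_add]; ring
          _ = Q^(m*n + (m+1+n)*j) * (w^j * (qPC Q (Q^(n+1)*w) m)⁻¹) := by rw [he]
          _ = (Q^(m*n) * (qPC Q (Q^(n+1)*w) m)⁻¹) * ((Q^(m+1+n))^j * w^j) := by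
              rw [pow_add, pow_mul]; ring
          _ = (Q^(m*n) * (qPC Q (Q^(n+1)*w) m)⁻¹) * (Q^(m+1+n)*w)^j := by rw [mul_pow]
      rw [tsum_congr h2, tsum_mul_left, tsum_geometric_of_norm_lt_one hgeo]
      have h3 : qPC Q (Q^(n+1)*w) (m+1) = qPC Q (Q^(n+1)*w) m * (1 - Q^(m+1+n)*w) := by
        rw [qPC_succ]
        congr 2
        rw [← mul_assoc, ← pow_add, show m+(n+1) = m+1+n from by omega]
      rw [h3, mul_inv]
      ring
    -- telescoping evaluation of the n-sum
    have hHH : (1-Q^m) * (∑' n : ℕ, Q^(m*n) * (qPC Q (Q^(n+1)*w) (m+1))⁻¹)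
        = (qPC Q (Q*w) m)⁻¹ := by
      have htele : ∀ n : ℕ, (Q^(m*n) * (qPC Q (Q^(n+1)*w) m)⁻¹)
            - (Q^(m*(n+1)) * (qPC Q (Q^(n+2)*w) m)⁻¹)
          = (1-Q^m) * (Q^(m*n) * (qPC Q (Q^(n+1)*w) (m+1))⁻¹) := by
        intro n
        have harg : Q*(Q^(n+1)*w) = Q^(n+2)*w := by ring
        have hB : qPC Q (Q*(Q^(n+1)*w)) m ≠ 0 := by rw [harg]; exact hne (n+2) m
        have ht := tele2_gen Q (Q^(n+1)*w) m (hne (n+1) m) hB (hne (n+1) (m+1))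
        rw [harg] at ht
        calc (Q^(m*n) * (qPC Q (Q^(n+1)*w) m)⁻¹) - (Q^(m*(n+1)) * (qPC Q (Q^(n+2)*w) m)⁻¹)
            = Q^(m*n) * ((qPC Q (Q^(n+1)*w) m)⁻¹ - Q^m * (qPC Q (Q^(n+2)*w) m)⁻¹) := by
              rw [show m*(n+1) = m*n + m from by ring, pow_add]; ring
          _ = Q^(m*n) * ((1-Q^m) * (qPC Q (Q^(n+1)*w) (m+1))⁻¹) := by rw [ht]
          _ = (1-Q^m) * (Q^(m*n) * (qPC Q (Q^(n+1)*w) (m+1))⁻¹) := by ring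
      have hUnorm : ∀ n : ℕ, ‖Q^(m*n) * (qPC Q (Q^(n+1)*w) m)⁻¹‖ ≤ ((1-s)^m)⁻¹ * (q^m)^n := by
        intro n
        rw [norm_mul, hQpow, pow_mul, mul_comm (((1-s)^m)⁻¹)]
        exact mul_le_mul le_rfl (hinv (n+1) m) (norm_nonneg _) (by positivity)
      have hU0 : Tendsto (fun n : ℕ => Q^(m*n) * (qPC Q (Q^(n+1)*w) m)⁻¹) atTop (𝓝 0) := by
        apply squeeze_zero_norm hUnorm
        have h := (tendsto_pow_atTop_nhds_zero_of_lt_one (by positivity : (0:ℝ) ≤ q^m)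
          hqm1).const_mul (((1-s)^m)⁻¹)
        simpa using h
      have hnQm : ‖(1:ℂ)-Q^m‖ ≤ 2 := by
        calc ‖(1:ℂ)-Q^m‖ ≤ ‖(1:ℂ)‖ + ‖Q^m‖ := norm_sub_le _ _
          _ = 1 + q^m := by rw [norm_one, hQpow]
          _ ≤ 2 := by nlinarith [pow_le_one₀ hq01 hq1' (n := m)]
      have hsumdiff : Summable (fun n : ℕ => (Q^(m*n) * (qPC Q (Q^(n+1)*w) m)⁻¹)
          - (Q^(m*(n+1)) * (qPC Q (Q^(n+2)*w) m)⁻¹)) := by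
        apply Summable.of_norm
        apply keyS _ (2 * (((1-s)^(m+1))⁻¹)) (q^m) (by positivity) hqm1
        intro n
        rw [htele n, norm_mul, norm_mul, hQpow, pow_mul]
        calc ‖(1:ℂ)-Q^m‖ * ((q^m)^n * ‖(qPC Q (Q^(n+1)*w) (m+1))⁻¹‖)
            ≤ 2 * ((q^m)^n * ((1-s)^(m+1))⁻¹) := by
              apply mul_le_mul hnQm _ (by positivity) (by norm_num)
              exact mul_le_mul le_rfl (hinv (n+1) (m+1)) (norm_nonneg _) (by positivity)
          _ = 2*((1-s)^(m+1))⁻¹ * (q^m)^n := by ring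
      have hhs : HasSum (fun n : ℕ => (Q^(m*n) * (qPC Q (Q^(n+1)*w) m)⁻¹)
          - (Q^(m*(n+1)) * (qPC Q (Q^(n+2)*w) m)⁻¹)) (Q^(m*0) * (qPC Q (Q^(0+1)*w) m)⁻¹) := by
        rw [hsumdiff.hasSum_iff_tendsto_nat]
        have hps : ∀ N : ℕ, ∑ i ∈ Finset.range N,
            ((Q^(m*i) * (qPC Q (Q^(i+1)*w) m)⁻¹) - (Q^(m*(i+1)) * (qPC Q (Q^(i+2)*w) m)⁻¹))
            = Q^(m*0) * (qPC Q (Q^(0+1)*w) m)⁻¹ - Q^(m*N) * (qPC Q (Q^(N+1)*w) m)⁻¹ :=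
          fun N => Finset.sum_range_sub' (fun n => Q^(m*n) * (qPC Q (Q^(n+1)*w) m)⁻¹) N
        simp only [hps]
        simpa using tendsto_const_nhds.sub hU0
      calc (1-Q^m) * (∑' n : ℕ, Q^(m*n) * (qPC Q (Q^(n+1)*w) (m+1))⁻¹)
          = ∑' n : ℕ, (1-Q^m) * (Q^(m*n) * (qPC Q (Q^(n+1)*w) (m+1))⁻¹) := tsum_mul_left.symm
        _ = ∑' n : ℕ, ((Q^(m*n) * (qPC Q (Q^(n+1)*w) m)⁻¹)
              - (Q^(m*(n+1)) * (qPC Q (Q^(n+2)*w) m)⁻¹)) := tsum_congr (fun n => (htele n).symm)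
        _ = Q^(m*0) * (qPC Q (Q^(0+1)*w) m)⁻¹ := hhs.tsum_eq
        _ = (qPC Q (Q*w) m)⁻¹ := by rw [Nat.mul_zero, pow_zero, one_mul, zero_add, pow_one]
    -- reindexing of the first sum
    have sumg : Summable (fun j : ℕ => Q^(m*j) * w^j / (1 - Q^(j+m+1))) := part3.of_norm
    have hQmw : ‖Q^m*w‖ < 1 := lt_of_le_of_lt (hxle m) hs1
    have hf1 : (∑' j : ℕ, Q^((m+1)*j) * w^j / (1 - Q^(j+m)))
        = (1-Q^m)⁻¹ + (w * (∑' j : ℕ, Q^(m*j) * w^j / (1 - Q^(j+m+1))) - w * (1 - Q^m*w)⁻¹) := by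
      rw [Summable.tsum_eq_zero_add sumf1]
      congr 1
      · rw [Nat.mul_zero, pow_zero, pow_zero, one_mul, Nat.zero_add, one_div]
      · have hpt : ∀ j : ℕ, Q^((m+1)*(j+1)) * w^(j+1) / (1 - Q^(j+1+m))
            = w * (Q^(m*j) * w^j / (1 - Q^(j+m+1))) - w * (Q^m*w)^j := by
          intro j
          have hd := hden (j+m+1) (by omega)
          rw [show j+1+m = j+m+1 from by omega]
          rw [div_eq_iff hd, sub_mul, mul_assoc w, div_mul_cancel₀ _ hd,
            show (m+1)*(j+1) = m*j + (j+m+1) from by ring, pow_add, mul_pow, ← pow_mul]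
          ring
        rw [tsum_congr hpt,
          Summable.tsum_sub (sumg.mul_left w) ((summable_geometric_of_norm_lt_one hQmw).mul_left w),
          tsum_mul_left, tsum_mul_left, tsum_geometric_of_norm_lt_one hQmw]
    -- ratio identity
    have hratio : qPC Q w m * (qPC Q (Q*w) m)⁻¹ = (1-w) * (1 - Q^m*w)⁻¹ := by
      obtain ⟨M, rfl⟩ : ∃ M, m = M+1 := ⟨m-1, by omega⟩
      have harg : Q^(1:ℕ)*w = Q*w := by rw [pow_one]
      have hK : qPC Q (Q*w) M ≠ 0 := by have := hne 1 M; rwa [harg] at this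
      have h2 : qPC Q (Q*w) (M+1) = qPC Q (Q*w) M * (1 - Q^(M+1)*w) := by
        rw [qPC_succ]
        congr 2
        rw [← mul_assoc, ← pow_succ]
      rw [qPC_succ', h2, mul_inv]
      rw [mul_assoc, ← mul_assoc (qPC Q (Q*w) M), mul_inv_cancel₀ hK, one_mul]
    -- final assembly
    apply mul_left_cancel₀ hw0
    rw [keyEq, hswap, hf1]
    have hHH' : (∑' n : ℕ, Q^(m*n) * (qPC Q (Q^(n+1)*w) (m+1))⁻¹)
        = (1-Q^m)⁻¹ * (qPC Q (Q*w) m)⁻¹ := by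
      rw [← hHH, ← mul_assoc, inv_mul_cancel₀ (hden m hm), one_mul]
    rw [hHH']
    have hrt : qPC Q w m * ((1-Q^m)⁻¹ * (qPC Q (Q*w) m)⁻¹)
        = (1-Q^m)⁻¹ * ((1-w) * (1 - Q^m*w)⁻¹) := by
      rw [show qPC Q w m * ((1-Q^m)⁻¹ * (qPC Q (Q*w) m)⁻¹)
        = (1-Q^m)⁻¹ * (qPC Q w m * (qPC Q (Q*w) m)⁻¹) from by ring, hratio]
    rw [hrt]
    field_simp [hden m hm, hmw]
    ring
end

section
/- For every q ∈ (0,1), every real a > 0, and every m ∈ ℕ (m ≥ 0): Σ over all (m+1)-tuples of natural numbers 0 ≤ n_m ≤ n_{m−1} ≤ … ≤ n_0 < ∞ of q^{n_0+…+n_{m−1}+n_m} / [ (q^{n_m+a};q)_2 (q^{n_{m−1}+a+2};q)_2 ⋯ (q^{n_1+a+2m−2};q)_2 (q^{n_0+a+2m};q)_1 ] = (1 / ((q;q)_m (q^a;q)_m)) · Σ_{j=0}^∞ q^{(m+a)j} / (1 − q^{j+m+1}), with all series converging absolutely (here q^a denotes the real power). -/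
open scoped BigOperators

/-- The q-Pochhammer symbol `(x;q)_r = ∏_{i=0}^{r−1} (1 − q^i x)` (real version). -/
noncomputable def qPR (q x : ℝ) (r : ℕ) : ℝ := ∏ i ∈ Finset.range r, (1 - q ^ i * x)


/-- The summand of the left-hand side of Statement 12, for an antitone tuple
`n_m ≤ n_{m−1} ≤ … ≤ n_0` (here `n i` is `n_i`):
`q^{n_0+…+n_m} / [(q^{n_m+a};q)_2 (q^{n_{m−1}+a+2};q)_2 ⋯ (q^{n_1+a+2m−2};q)_2 (q^{n_0+a+2m};q)_1]`. -/
noncomputable def lhsTerm12 (q a : ℝ) (m : ℕ) (n : Fin (m + 1) → ℕ) : ℝ :=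
  q ^ (∑ i : Fin (m + 1), n i) /
    (qPR q (q ^ ((n 0 : ℝ) + a + (2 * m : ℕ))) 1 *
      ∏ i : Fin m, qPR q (q ^ ((n i.succ : ℝ) + a + ((2 * (m - 1 - (i : ℕ)) : ℕ) : ℝ))) 2)

lemma qPR_zero (q x : ℝ) : qPR q x 0 = 1 := by simp [qPR]

lemma qPR_one (q x : ℝ) : qPR q x 1 = 1 - x := by simp [qPR]

lemma qPR_succ (q x : ℝ) (r : ℕ) : qPR q x (r+1) = qPR q x r * (1 - q ^ r * x) := by
  simp [qPR, Finset.prod_range_succ]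

lemma qPR_shift (q x : ℝ) (r : ℕ) : qPR q x (r+1) = (1 - x) * qPR q (q * x) r := by
  rw [qPR, Finset.prod_range_succ', mul_comm]
  congr 1
  · simp
  · apply Finset.prod_congr rfl
    intro i _
    rw [pow_succ']
    ring

lemma qPR_add (q x : ℝ) (r s : ℕ) : qPR q x (r+s) = qPR q x r * qPR q (q ^ r * x) s := by
  rw [qPR, qPR, qPR, Finset.prod_range_add]
  congr 1
  apply Finset.prod_congr rfl
  intro i _
  rw [pow_add]
  ring

lemma qPR_pos {q : ℝ} (hq0 : 0 ≤ q) (hq1 : q ≤ 1) {x : ℝ} (hx0 : 0 ≤ x) (hx1 : x < 1) (r : ℕ) :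
    0 < qPR q x r := by
  apply Finset.prod_pos
  intro i _
  have h1 : q ^ i ≤ 1 := pow_le_one₀ hq0 hq1
  nlinarith [pow_nonneg hq0 i]

lemma qPR_le_one {q : ℝ} (hq0 : 0 ≤ q) (hq1 : q ≤ 1) {x : ℝ} (hx0 : 0 ≤ x) (hx1 : x < 1) (r : ℕ) :
    qPR q x r ≤ 1 := by
  apply Finset.prod_le_one
  · intro i _
    have h1 : q ^ i ≤ 1 := pow_le_one₀ hq0 hq1
    nlinarith [pow_nonneg hq0 i]
  · intro i _
    nlinarith [pow_nonneg hq0 i, mul_nonneg (pow_nonneg hq0 i) hx0]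

lemma qPR_anti {q : ℝ} (hq0 : 0 ≤ q) (hq1 : q ≤ 1) {x y : ℝ} (hx0 : 0 ≤ x) (hxy : x ≤ y)
    (hy1 : y < 1) (r : ℕ) : qPR q y r ≤ qPR q x r := by
  apply Finset.prod_le_prod
  · intro i _
    have h1 : q ^ i ≤ 1 := pow_le_one₀ hq0 hq1
    nlinarith [pow_nonneg hq0 i]
  · intro i _
    nlinarith [pow_nonneg hq0 i]

lemma alg1 {A B C Q z : ℝ} (hA : A ≠ 0) (hB : B ≠ 0) (hD : 1 - Q*z ≠ 0)
    (hrel : A*(1-Q*z) = (1-z)*B) : C/A - Q*(C/B) = C*(1-Q)/(A*(1-Q*z)) := by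
  field_simp
  linear_combination (-(Q) * C) * hrel

lemma lemB_summable {q : ℝ} (hq0 : 0 < q) (hq1 : q < 1) {z : ℝ} (hz0 : 0 ≤ z) (hz1 : z < 1)
    (m : ℕ) : Summable (fun n : ℕ => z ^ n * qPR q (q ^ (n+1)) m) := by
  have hqn : ∀ n : ℕ, 0 ≤ q ^ (n+1) ∧ q ^ (n+1) < 1 := fun n =>
    ⟨pow_nonneg hq0.le _, pow_lt_one₀ hq0.le hq1 (Nat.succ_ne_zero n)⟩
  apply Summable.of_nonneg_of_le
    (fun n => mul_nonneg (pow_nonneg hz0 n)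
      (qPR_pos hq0.le hq1.le (hqn n).1 (hqn n).2 m).le)
    (fun n => ?_) (summable_geometric_of_lt_one hz0 hz1)
  calc z ^ n * qPR q (q ^ (n+1)) m
      ≤ z ^ n * 1 := by
        exact mul_le_mul_of_nonneg_left (qPR_le_one hq0.le hq1.le (hqn n).1 (hqn n).2 m)
          (pow_nonneg hz0 n)
    _ = z ^ n := mul_one _

lemma lemB {q : ℝ} (hq0 : 0 < q) (hq1 : q < 1) (m : ℕ) :
    ∀ z : ℝ, 0 ≤ z → z < 1 →
      ∑' n : ℕ, z ^ n * qPR q (q ^ (n+1)) m = qPR q q m / qPR q z (m+1) := by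
  induction m with
  | zero =>
    intro z hz0 hz1
    simp only [qPR_zero, mul_one]
    rw [tsum_geometric_of_lt_one hz0 hz1]
    norm_num [qPR_zero, qPR_one, one_div]
  | succ m ih =>
    intro z hz0 hz1
    have hqz0 : 0 ≤ q * z := mul_nonneg hq0.le hz0
    have hqz1 : q * z < 1 := by nlinarith
    have key : ∀ n : ℕ, z ^ n * qPR q (q ^ (n+1)) (m+1)
        = z ^ n * qPR q (q ^ (n+1)) m - q ^ (m+1) * ((q*z) ^ n * qPR q (q ^ (n+1)) m) := by
      intro n
      rw [qPR_succ, mul_pow]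
      ring
    have hs1 := lemB_summable hq0 hq1 hz0 hz1 m
    have hs2 := lemB_summable hq0 hq1 hqz0 hqz1 m
    calc ∑' n : ℕ, z ^ n * qPR q (q ^ (n+1)) (m+1)
        = ∑' n : ℕ, (z ^ n * qPR q (q ^ (n+1)) m
            - q ^ (m+1) * ((q*z) ^ n * qPR q (q ^ (n+1)) m)) := by
          exact tsum_congr key
      _ = (∑' n : ℕ, z ^ n * qPR q (q ^ (n+1)) m)
            - q ^ (m+1) * ∑' n : ℕ, (q*z) ^ n * qPR q (q ^ (n+1)) m := by
          rw [Summable.tsum_sub hs1 (hs2.mul_left _), tsum_mul_left]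
      _ = qPR q q m / qPR q z (m+1) - q ^ (m+1) * (qPR q q m / qPR q (q*z) (m+1)) := by
          rw [ih z hz0 hz1, ih (q*z) hqz0 hqz1]
      _ = qPR q q (m+1) / qPR q z (m+2) := by
          have hA : qPR q z (m+1) ≠ 0 := (qPR_pos hq0.le hq1.le hz0 hz1 _).ne'
          have hB : qPR q (q*z) (m+1) ≠ 0 := (qPR_pos hq0.le hq1.le hqz0 hqz1 _).ne'
          have hC : qPR q z (m+2) ≠ 0 := (qPR_pos hq0.le hq1.le hz0 hz1 _).ne'
          have hrel : qPR q z (m+1) * (1 - q ^ (m+1) * z) = (1 - z) * qPR q (q*z) (m+1) := by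
            rw [← qPR_succ, qPR_shift]
          have h2 : qPR q q (m+1) = qPR q q m * (1 - q ^ (m+1)) := by
            rw [qPR_succ, pow_succ]
          have hD : (1 : ℝ) - q ^ (m+1) * z ≠ 0 := by
            have : q ^ (m+1) * z < 1 := by
              have h1 : q ^ (m+1) ≤ 1 := pow_le_one₀ hq0.le hq1.le
              nlinarith [pow_nonneg hq0.le (m+1)]
            linarith
          rw [h2, qPR_succ q z (m+1)]
          exact alg1 hA hB hD hrel

lemma lemF {q : ℝ} (hq0 : 0 < q) (hq1 : q < 1) {w : ℝ} (hw0 : 0 ≤ w) (hw1 : w < 1) (m : ℕ) :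
    Summable (fun N : ℕ => q ^ N * qPR q (q ^ (N+1)) m / qPR q (w * q ^ N) (m+1)) ∧
    Summable (fun j : ℕ => w ^ j / (1 - q ^ (j+m+1))) ∧
    ∑' N : ℕ, q ^ N * qPR q (q ^ (N+1)) m / qPR q (w * q ^ N) (m+1)
      = ∑' j : ℕ, w ^ j / (1 - q ^ (j+m+1)) := by
  have hq0' := hq0.le
  have hq1' := hq1.le
  have hP : 0 < qPR q q m := qPR_pos hq0' hq1' hq0' hq1 m
  have hqpow0 : ∀ k : ℕ, 0 ≤ q ^ k := fun k => pow_nonneg hq0' k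
  have hqpow1 : ∀ k : ℕ, q ^ k ≤ 1 := fun k => pow_le_one₀ hq0' hq1'
  have hqpows : ∀ k : ℕ, q ^ (k+1) < 1 := fun k => pow_lt_one₀ hq0' hq1 (Nat.succ_ne_zero k)
  have hz : ∀ N : ℕ, 0 ≤ w * q ^ N ∧ w * q ^ N < 1 := by
    intro N
    constructor
    · exact mul_nonneg hw0 (hqpow0 N)
    · calc w * q ^ N ≤ w * 1 := mul_le_mul_of_nonneg_left (hqpow1 N) hw0
        _ < 1 := by linarith
  -- the double array
  set h : ℕ → ℕ → ℝ := fun N j =>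
    (w * q ^ N) ^ j * qPR q (q ^ (j+1)) m * (q ^ N * qPR q (q ^ (N+1)) m / qPR q q m) with hh
  have hnonneg : ∀ N j, 0 ≤ h N j := by
    intro N j
    apply mul_nonneg (mul_nonneg (pow_nonneg (hz N).1 j)
      (qPR_pos hq0' hq1' (hqpow0 (j+1)) (hqpows j) m).le)
    apply div_nonneg (mul_nonneg (hqpow0 N)
      (qPR_pos hq0' hq1' (hqpow0 (N+1)) (hqpows N) m).le) hP.le
  -- row summability and row sums
  have hrowSummable : ∀ N, Summable (fun j => h N j) := by
    intro N
    exact (lemB_summable hq0 hq1 (hz N).1 (hz N).2 m).mul_right _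
  have hrow : ∀ N, ∑' j, h N j = q ^ N * qPR q (q ^ (N+1)) m / qPR q (w * q ^ N) (m+1) := by
    intro N
    rw [tsum_mul_right, lemB hq0 hq1 m _ (hz N).1 (hz N).2]
    rw [div_mul_div_comm, mul_comm (qPR q q m) (q ^ N * qPR q (q ^ (N + 1)) m),
      mul_comm (qPR q (w * q ^ N) (m + 1)) (qPR q q m),
      mul_comm (q ^ N * qPR q (q ^ (N + 1)) m) (qPR q q m), mul_div_mul_left _ _ hP.ne']
  -- column identity
  have hcol_eq : ∀ N j, h N j
      = (q ^ (j+1)) ^ N * qPR q (q ^ (N+1)) m * (w ^ j * qPR q (q ^ (j+1)) m / qPR q q m) := by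
    intro N j
    rw [hh]
    simp only []
    rw [mul_pow]
    ring
  have hcolSummable : ∀ j, Summable (fun N => h N j) := by
    intro j
    have := (lemB_summable hq0 hq1 (hqpow0 (j+1)) (hqpows j) m).mul_right
      (w ^ j * qPR q (q ^ (j+1)) m / qPR q q m)
    apply this.congr
    intro N
    exact (hcol_eq N j).symm
  have hcol : ∀ j, ∑' N, h N j = w ^ j / (1 - q ^ (j+m+1)) := by
    intro j
    have h1 : ∑' N, h N j
        = (∑' N : ℕ, (q ^ (j+1)) ^ N * qPR q (q ^ (N+1)) m)
            * (w ^ j * qPR q (q ^ (j+1)) m / qPR q q m) := by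
      rw [← tsum_mul_right]
      exact tsum_congr fun N => hcol_eq N j
    rw [h1, lemB hq0 hq1 m _ (hqpow0 (j+1)) (hqpows j)]
    have h2 : qPR q (q ^ (j+1)) (m+1) = qPR q (q ^ (j+1)) m * (1 - q ^ (j+m+1)) := by
      rw [qPR_succ, ← pow_add]
      congr 3
      omega
    have h3 : qPR q (q ^ (j+1)) m ≠ 0 :=
      (qPR_pos hq0' hq1' (hqpow0 (j+1)) (hqpows j) m).ne'
    have h4 : (1:ℝ) - q ^ (j+m+1) ≠ 0 := by
      have := hqpows (j+m)
      have : q ^ (j+m+1) < 1 := by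
        calc q ^ (j+m+1) = q ^ ((j+m)+1) := by ring_nf
          _ < 1 := hqpows (j+m)
      linarith
    rw [h2, div_mul_div_comm, div_eq_div_iff (mul_ne_zero (mul_ne_zero h3 h4) hP.ne') h4]
    ring
  -- summability of the marginal
  have hmargSummable : Summable (fun N : ℕ =>
      q ^ N * qPR q (q ^ (N+1)) m / qPR q (w * q ^ N) (m+1)) := by
    have hK : 0 < qPR q w (m+1) := qPR_pos hq0' hq1' hw0 hw1 (m+1)
    apply Summable.of_nonneg_of_le
      (fun N => div_nonneg (mul_nonneg (hqpow0 N)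
        (qPR_pos hq0' hq1' (hqpow0 (N+1)) (hqpows N) m).le)
        (qPR_pos hq0' hq1' (hz N).1 (hz N).2 (m+1)).le)
      (fun N => ?_) ((summable_geometric_of_lt_one hq0' hq1).mul_right (qPR q w (m+1))⁻¹)
    have hd : qPR q w (m+1) ≤ qPR q (w * q ^ N) (m+1) := by
      apply qPR_anti hq0' hq1' (hz N).1 _ hw1 (m+1)
      calc w * q ^ N ≤ w * 1 := mul_le_mul_of_nonneg_left (hqpow1 N) hw0
        _ = w := mul_one w
    calc q ^ N * qPR q (q ^ (N+1)) m / qPR q (w * q ^ N) (m+1)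
        ≤ q ^ N * 1 / qPR q w (m+1) := by
          apply div_le_div₀ (by positivity)
            (mul_le_mul_of_nonneg_left
              (qPR_le_one hq0' hq1' (hqpow0 (N+1)) (hqpows N) m) (hqpow0 N)) hK hd
      _ = q ^ N * (qPR q w (m+1))⁻¹ := by rw [mul_one, div_eq_mul_inv]
  -- summability of the double array
  have hprod : Summable (Function.uncurry h) := by
    exact (summable_prod_of_nonneg (fun p => hnonneg p.1 p.2)).2
      ⟨fun N => hrowSummable N, hmargSummable.congr (fun N => (hrow N).symm)⟩
  -- the j-marginal summability
  have hjSummable : Summable (fun j : ℕ => w ^ j / (1 - q ^ (j+m+1))) := by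
    apply Summable.of_nonneg_of_le (fun j => ?_) (fun j => ?_)
      ((summable_geometric_of_lt_one hw0 hw1).mul_right (1 - q)⁻¹)
    · have : q ^ (j+m+1) < 1 := by
        calc q ^ (j+m+1) = q ^ ((j+m)+1) := by ring_nf
          _ < 1 := hqpows (j+m)
      apply div_nonneg (pow_nonneg hw0 j)
      linarith
    · have h5 : q ^ (j+m+1) ≤ q := by
        calc q ^ (j+m+1) = q ^ ((j+m)+1) := by ring_nf
          _ ≤ q ^ 1 := pow_le_pow_of_le_one hq0' hq1' (by omega)
          _ = q := pow_one q
      have h6 : 0 < 1 - q := by linarith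
      have h7 : 1 - q ≤ 1 - q ^ (j+m+1) := by linarith
      rw [div_eq_mul_inv]
      exact mul_le_mul_of_nonneg_left (by
        apply inv_anti₀ h6 h7) (pow_nonneg hw0 j)
  refine ⟨hmargSummable, hjSummable, ?_⟩
  calc ∑' N : ℕ, q ^ N * qPR q (q ^ (N+1)) m / qPR q (w * q ^ N) (m+1)
      = ∑' N, ∑' j, h N j := (tsum_congr fun N => (hrow N).symm)
    _ = ∑' j, ∑' N, h N j := (Summable.tsum_comm hprod).symm
    _ = ∑' j : ℕ, w ^ j / (1 - q ^ (j+m+1)) := tsum_congr fun j => hcol j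

section
variable {q a : ℝ}

lemma lemD (hq0 : 0 < q) (hq1 : q < 1) (ha : 0 < a) (m M : ℕ) :
    qPR q (q ^ (M+1)) (m+1) / qPR q (q ^ ((((M+1) : ℕ) : ℝ) + a + m) ) (m+1)
      - qPR q (q ^ M) (m+1) / qPR q (q ^ ((M : ℝ) + a + m)) (m+1)
    = (1 - q ^ (m+1)) * (1 - q ^ (a + (m : ℝ)))
        * (q ^ M * qPR q (q ^ (M+1)) m / qPR q (q ^ ((M : ℝ) + a + m)) (m+2)) := by
  have hq0' := hq0.le
  have hq1' := hq1.le
  set u : ℝ := q ^ M with hu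
  set w : ℝ := q ^ (a + (m : ℝ)) with hw
  have hw0 : 0 < w := Real.rpow_pos_of_pos hq0 _
  have hw1 : w < 1 := Real.rpow_lt_one hq0' hq1 (by positivity)
  have hu0 : 0 ≤ u := pow_nonneg hq0' M
  have hu1 : u ≤ 1 := pow_le_one₀ hq0' hq1'
  have harg1 : q ^ ((M : ℝ) + a + m) = u * w := by
    rw [show (M : ℝ) + a + m = (M : ℝ) + (a + (m : ℝ)) by ring, Real.rpow_add hq0,
      Real.rpow_natCast]
  have harg2 : q ^ ((((M+1) : ℕ) : ℝ) + a + m) = q * (u * w) := by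
    push_cast
    rw [show (M : ℝ) + 1 + a + m = 1 + ((M : ℝ) + (a + (m : ℝ))) by ring, Real.rpow_add hq0,
      Real.rpow_add hq0, Real.rpow_one, Real.rpow_natCast]
  have huw0 : 0 ≤ u * w := mul_nonneg hu0 hw0.le
  have huw1 : u * w < 1 := by nlinarith
  have hquw0 : 0 ≤ q * (u * w) := by positivity
  have hquw1 : q * (u * w) < 1 := by nlinarith
  rw [harg1, harg2]
  rw [qPR_succ q (q ^ (M+1)) m, qPR_succ q (q * (u*w)) m,
    show qPR q (q ^ M) (m+1) = (1 - u) * qPR q (q ^ (M+1)) m by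
      rw [hu, qPR_shift, ← pow_succ'],
    show qPR q (u*w) (m+1) = (1 - u*w) * qPR q (q * (u*w)) m from qPR_shift q (u*w) m,
    show qPR q (u*w) (m+2) = (1 - u*w) * (qPR q (q*(u*w)) m * (1 - q ^ m * (q * (u*w)))) by
      rw [qPR_shift q (u*w) (m+1), qPR_succ]]
  have hA : (0:ℝ) < qPR q (q*(u*w)) m := qPR_pos hq0' hq1' hquw0 hquw1 m
  have hB : (0:ℝ) < 1 - u*w := by linarith
  have hC : (0:ℝ) < 1 - q ^ m * (q * (u*w)) := by
    have h1 : q ^ m ≤ 1 := pow_le_one₀ hq0' hq1'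
    nlinarith [pow_nonneg hq0' m]
  have hx : q ^ m * q ^ (M+1) = q ^ (m+1) * u := by rw [hu, ← pow_add, ← pow_add]; ring_nf
  rw [hx]
  have hwq : (1:ℝ) - q^(a + (m:ℝ)) = 1 - w := by rw [hw]
  rw [hwq]
  rw [div_sub_div _ _ (mul_pos hA hC).ne' (mul_pos hB hA).ne', mul_div_assoc',
    div_eq_div_iff (mul_ne_zero (mul_pos hA hC).ne' (mul_pos hB hA).ne')
      (mul_pos hB (mul_pos hA hC)).ne']
  ring
end

section
variable {q a : ℝ}

lemma lemC (hq0 : 0 < q) (hq1 : q < 1) (ha : 0 < a) (m K : ℕ) :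
    ∑ M ∈ Finset.range K, q ^ M * qPR q (q ^ (M+1)) m / qPR q (q ^ ((M : ℝ) + a + m)) (m+2)
    = qPR q (q ^ K) (m+1) / qPR q (q ^ ((K : ℝ) + a + m)) (m+1)
        / ((1 - q ^ (m+1)) * (1 - q ^ (a + (m : ℝ)))) := by
  have hq0' := hq0.le
  have hq1' := hq1.le
  set c : ℝ := (1 - q ^ (m+1)) * (1 - q ^ (a + (m : ℝ))) with hc
  set f : ℕ → ℝ := fun M => qPR q (q ^ M) (m+1) / qPR q (q ^ ((M : ℝ) + a + m)) (m+1) with hf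
  have hcne : c ≠ 0 := by
    have h1 : q ^ (m+1) < 1 := pow_lt_one₀ hq0' hq1 (Nat.succ_ne_zero m)
    have h2 : q ^ (a + (m:ℝ)) < 1 := Real.rpow_lt_one hq0' hq1 (by positivity)
    have h3 : (0:ℝ) < 1 - q ^ (m+1) := by linarith
    have h4 : (0:ℝ) < 1 - q ^ (a + (m:ℝ)) := by linarith
    positivity
  have hterm : ∀ M : ℕ, q ^ M * qPR q (q ^ (M+1)) m / qPR q (q ^ ((M : ℝ) + a + m)) (m+2)
      = (f (M+1) - f M) / c := by
    intro M
    rw [eq_div_iff hcne, hf]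
    simp only []
    rw [lemD hq0 hq1 ha m M]
    rw [hc]
    ring
  calc ∑ M ∈ Finset.range K, q ^ M * qPR q (q ^ (M+1)) m / qPR q (q ^ ((M : ℝ) + a + m)) (m+2)
      = ∑ M ∈ Finset.range K, (f (M+1) - f M) / c := Finset.sum_congr rfl fun M _ => hterm M
    _ = (∑ M ∈ Finset.range K, (f (M+1) - f M)) / c := by rw [Finset.sum_div]
    _ = (f K - f 0) / c := by rw [Finset.sum_range_sub]
    _ = f K / c := by
        have : f 0 = 0 := by
          rw [hf]
          simp only []
          rw [pow_zero, qPR_shift]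
          simp
        rw [this, sub_zero]
end

-- Antitone / Fin.cons helpers
lemma anti_tail {k : ℕ} {f : Fin (k+1) → ℕ} (hf : Antitone f) : Antitone (Fin.tail f) :=
  fun i j hij => hf (Fin.succ_le_succ_iff.mpr hij)

lemma anti_cons_le {k N : ℕ} {t : Fin k → ℕ}
    (h : Antitone (Fin.cons N t : Fin (k+1) → ℕ)) (i : Fin k) : t i ≤ N := by
  have := h (Fin.zero_le i.succ)
  simpa using this

lemma anti_cons {k N : ℕ} {t : Fin k → ℕ} (ht : Antitone t) (hle : ∀ i, t i ≤ N) :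
    Antitone (Fin.cons N t : Fin (k+1) → ℕ) := by
  intro i j hij
  induction j using Fin.cases with
  | zero =>
    have : i = 0 := le_antisymm hij (Fin.zero_le i)
    simp [this]
  | succ j' =>
    induction i using Fin.cases with
    | zero => simpa using hle j'
    | succ i' =>
      simp only [Fin.cons_succ]
      exact ht (by exact_mod_cast Fin.succ_le_succ_iff.mp hij)

def AT (m N : ℕ) : Type := {t : Fin m → ℕ // Antitone (Fin.cons N t : Fin (m+1) → ℕ)}

instance ATfinite (m N : ℕ) : Finite (AT m N) := by
  apply Finite.of_injective (fun t : AT m N => fun i : Fin m => (⟨t.1 i, Nat.lt_succ_of_le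
    (anti_cons_le t.2 i)⟩ : Fin (N+1)))
  intro t s h
  apply Subtype.ext
  funext i
  exact congrArg Fin.val (congrFun h i)

instance ATunique (N : ℕ) : Unique (AT 0 N) := by
  refine ⟨⟨⟨(fun i => 0 : Fin 0 → ℕ), ?_⟩⟩, ?_⟩
  · intro i j _
    have hij : i = j := Fin.ext (by omega)
    rw [hij]
  · intro t
    apply Subtype.ext
    funext i
    exact absurd i.2 (by omega)

def eAT (m N : ℕ) : AT (m+1) N ≃ Σ M : Fin (N+1), AT m M where
  toFun t := ⟨⟨t.1 0, Nat.lt_succ_of_le (anti_cons_le t.2 0)⟩,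
    ⟨Fin.tail t.1, by
      have h1 : Antitone t.1 := anti_tail t.2
      rw [Fin.cons_self_tail]
      exact h1⟩⟩
  invFun p := ⟨Fin.cons (p.1 : ℕ) p.2.1, by
    apply anti_cons p.2.2
    intro i
    induction i using Fin.cases with
    | zero => simpa using Nat.lt_succ_iff.mp p.1.2
    | succ i' =>
      simp only [Fin.cons_succ]
      exact le_trans (anti_cons_le p.2.2 i') (Nat.lt_succ_iff.mp p.1.2)⟩
  left_inv t := Subtype.ext (Fin.cons_self_tail t.1)
  right_inv p := rfl

def eMain (m : ℕ) : {n : Fin (m+1) → ℕ // Antitone n} ≃ Σ N : ℕ, AT m N where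
  toFun n := ⟨n.1 0, ⟨Fin.tail n.1, by rw [Fin.cons_self_tail]; exact n.2⟩⟩
  invFun p := ⟨Fin.cons p.1 p.2.1, p.2.2⟩
  left_inv n := Subtype.ext (Fin.cons_self_tail n.1)
  right_inv p := rfl

lemma eMain_symm_apply (m : ℕ) (p : Σ N : ℕ, AT m N) :
    ((eMain m).symm p).1 = Fin.cons p.1 p.2.1 := rfl

noncomputable def Vq (q a : ℝ) (m : ℕ) (t : Fin m → ℕ) : ℝ :=
  q ^ (∑ i, t i) / ∏ i : Fin m, qPR q (q ^ ((t i : ℝ) + a + ((2 * (m - 1 - (i : ℕ)) : ℕ) : ℝ))) 2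

noncomputable def CSq (q a : ℝ) (m N : ℕ) : ℝ :=
  qPR q (q ^ (N+1)) m / (qPR q q m * qPR q (q ^ a) m * qPR q (q ^ ((N : ℝ) + a + m)) m)

lemma Vq_cons (q a : ℝ) (m : ℕ) (M : ℕ) (s : Fin m → ℕ) :
    Vq q a (m+1) (Fin.cons M s)
      = q ^ M / qPR q (q ^ ((M : ℝ) + a + ((2 * m : ℕ) : ℝ))) 2 * Vq q a m s := by
  unfold Vq
  rw [Fin.sum_cons, Fin.prod_univ_succ]
  simp only [Fin.cons_zero, Fin.cons_succ]
  rw [pow_add, div_mul_div_comm]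
  congr 2
  apply Finset.prod_congr rfl
  intro i _
  have h : 2 * (m + 1 - 1 - ((i.succ : Fin (m+1)) : ℕ)) = 2 * (m - 1 - (i : ℕ)) := by
    rw [Fin.val_succ]
    omega
  rw [h]


lemma lhsTerm12_cons (q a : ℝ) (m : ℕ) (N : ℕ) (t : Fin m → ℕ) :
    lhsTerm12 q a m (Fin.cons N t)
      = q ^ N / (1 - q ^ ((N : ℝ) + a + ((2 * m : ℕ) : ℝ))) * Vq q a m t := by
  unfold lhsTerm12 Vq
  rw [Fin.sum_cons, qPR_one]
  simp only [Fin.cons_zero, Fin.cons_succ]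
  rw [pow_add, div_mul_div_comm]

section
variable {q a : ℝ}

lemma lemPT (hq0 : 0 < q) (hq1 : q < 1) (ha : 0 < a) (m M : ℕ) :
    q ^ M / qPR q (q ^ ((M : ℝ) + a + ((2 * m : ℕ) : ℝ))) 2 * CSq q a m M
    = 1 / (qPR q q m * qPR q (q ^ a) m)
        * (q ^ M * qPR q (q ^ (M+1)) m / qPR q (q ^ ((M : ℝ) + a + (m : ℝ))) (m+2)) := by
  have hq0' := hq0.le
  have hq1' := hq1.le
  have harg : q ^ (m:ℕ) * q ^ ((M:ℝ) + a + (m:ℝ)) = q ^ ((M:ℝ) + a + ((2*m:ℕ):ℝ)) := by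
    rw [← Real.rpow_natCast q m, ← Real.rpow_add hq0]
    congr 1
    push_cast
    ring
  have hsplit : qPR q (q ^ ((M:ℝ) + a + (m:ℝ))) (m+2)
      = qPR q (q ^ ((M:ℝ) + a + (m:ℝ))) m * qPR q (q ^ ((M:ℝ) + a + ((2*m:ℕ):ℝ))) 2 := by
    rw [qPR_add q _ m 2, harg]
  have hrp : ∀ x : ℝ, 0 < x → (0 < q ^ x ∧ q ^ x < 1) := fun x hx =>
    ⟨Real.rpow_pos_of_pos hq0 x, Real.rpow_lt_one hq0' hq1 hx⟩
  have h1 := hrp ((M:ℝ) + a + ((2*m:ℕ):ℝ)) (by positivity)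
  have h2 := hrp ((M:ℝ) + a + (m:ℝ)) (by positivity)
  have h3 := hrp a ha
  have hD1 : (0:ℝ) < qPR q (q ^ ((M:ℝ) + a + ((2*m:ℕ):ℝ))) 2 := qPR_pos hq0' hq1' h1.1.le h1.2 2
  have hDm : (0:ℝ) < qPR q (q ^ ((M:ℝ) + a + (m:ℝ))) m := qPR_pos hq0' hq1' h2.1.le h2.2 m
  have hPm : (0:ℝ) < qPR q q m := qPR_pos hq0' hq1' hq0' hq1 m
  have hAm : (0:ℝ) < qPR q (q ^ a) m := qPR_pos hq0' hq1' h3.1.le h3.2 m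
  rw [CSq, hsplit]
  field_simp

lemma lemA (hq0 : 0 < q) (hq1 : q < 1) (ha : 0 < a) (m : ℕ) :
    ∀ N : ℕ, ∑' t : AT m N, Vq q a m t.1 = CSq q a m N := by
  have hq0' := hq0.le
  have hq1' := hq1.le
  induction m with
  | zero =>
    intro N
    rw [tsum_eq_single (default : AT 0 N) (fun b hb => absurd (Subsingleton.elim b default) hb)]
    simp [Vq, CSq, qPR_zero]
  | succ m ih =>
    intro N
    have hc2 : (0:ℝ) < 1 - q ^ (m+1) := by
      have := pow_lt_one₀ hq0' hq1 (show m + 1 ≠ 0 by omega)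
      linarith
    have hc3 : (0:ℝ) < 1 - q ^ (a + (m:ℝ)) := by
      have := Real.rpow_lt_one hq0' hq1 (show (0:ℝ) < a + (m:ℝ) by positivity)
      linarith
    have hPm : (0:ℝ) < qPR q q m := qPR_pos hq0' hq1' hq0' hq1 m
    have hAm : (0:ℝ) < qPR q (q ^ a) m :=
      qPR_pos hq0' hq1' (Real.rpow_pos_of_pos hq0 a).le (Real.rpow_lt_one hq0' hq1 ha) m
    have hE : (0:ℝ) < qPR q (q ^ ((N:ℝ) + a + (((m+1):ℕ):ℝ))) (m+1) := by
      have hx : (0:ℝ) < (N:ℝ) + a + (((m+1):ℕ):ℝ) := by positivity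
      exact qPR_pos hq0' hq1' (Real.rpow_pos_of_pos hq0 _).le
        (Real.rpow_lt_one hq0' hq1 hx) (m+1)
    calc ∑' t : AT (m+1) N, Vq q a (m+1) t.1
        = ∑' p : (Σ M : Fin (N+1), AT m M), Vq q a (m+1) (Fin.cons (p.1:ℕ) p.2.1) := by
          rw [← Equiv.tsum_eq (eAT m N).symm (fun t : AT (m+1) N => Vq q a (m+1) t.1)]
          exact tsum_congr fun p => rfl
      _ = ∑' M : Fin (N+1), ∑' s : AT m M, Vq q a (m+1) (Fin.cons ((M:ℕ)) s.1) :=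
          Summable.tsum_sigma Summable.of_finite
      _ = ∑' M : Fin (N+1),
            q ^ (M:ℕ) / qPR q (q ^ (((M:ℕ) : ℝ) + a + ((2 * m : ℕ) : ℝ))) 2 * CSq q a m (M:ℕ) := by
          apply tsum_congr
          intro M
          calc ∑' s : AT m (M:ℕ), Vq q a (m+1) (Fin.cons ((M:ℕ)) s.1)
              = ∑' s : AT m (M:ℕ),
                  (q ^ (M:ℕ) / qPR q (q ^ (((M:ℕ) : ℝ) + a + ((2 * m : ℕ) : ℝ))) 2)
                    * Vq q a m s.1 := tsum_congr fun s => by rw [Vq_cons]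
            _ = (q ^ (M:ℕ) / qPR q (q ^ (((M:ℕ) : ℝ) + a + ((2 * m : ℕ) : ℝ))) 2)
                  * ∑' s : AT m (M:ℕ), Vq q a m s.1 := tsum_mul_left
            _ = _ := by rw [ih (M:ℕ)]
      _ = ∑ M ∈ Finset.range (N+1),
            q ^ M / qPR q (q ^ ((M : ℝ) + a + ((2 * m : ℕ) : ℝ))) 2 * CSq q a m M := by
          rw [tsum_fintype]
          exact Fin.sum_univ_eq_sum_range
            (fun M => q ^ M / qPR q (q ^ ((M : ℝ) + a + ((2 * m : ℕ) : ℝ))) 2 * CSq q a m M) (N+1)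
      _ = 1 / (qPR q q m * qPR q (q ^ a) m)
            * ∑ M ∈ Finset.range (N+1),
                q ^ M * qPR q (q ^ (M+1)) m / qPR q (q ^ ((M : ℝ) + a + (m : ℝ))) (m+2) := by
          rw [Finset.mul_sum]
          exact Finset.sum_congr rfl fun M _ => lemPT hq0 hq1 ha m M
      _ = CSq q a (m+1) N := by
          rw [lemC hq0 hq1 ha m (N+1), CSq]
          have hE2 : q ^ ((((N+1):ℕ):ℝ) + a + (m:ℝ)) = q ^ ((N:ℝ) + a + (((m+1):ℕ):ℝ)) := by
            congr 1
            push_cast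
            ring
          rw [hE2]
          have hq_succ : qPR q q (m+1) = qPR q q m * (1 - q^(m+1)) := by
            rw [qPR_succ, ← pow_succ]
          have hmix : q ^ (m:ℕ) * q ^ a = q ^ (a + (m:ℝ)) := by
            rw [← Real.rpow_natCast q m, ← Real.rpow_add hq0]
            congr 1
            ring
          have ha_succ : qPR q (q^a) (m+1) = qPR q (q^a) m * (1 - q^(a+(m:ℝ))) := by
            rw [qPR_succ, hmix]
          rw [hq_succ, ha_succ]
          field_simp
end

/-- For `q ∈ (0,1)`, `a > 0`, `m ≥ 0`:
`Σ_{0 ≤ n_m ≤ … ≤ n_0} q^{n_0+…+n_m}/[(q^{n_m+a};q)_2 ⋯ (q^{n_1+a+2m−2};q)_2 (q^{n_0+a+2m};q)_1]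
  = (1/((q;q)_m (q^a;q)_m)) Σ_{j=0}^∞ q^{(m+a)j}/(1 − q^{j+m+1})`,
with all series converging absolutely. -/
theorem statement12 (q : ℝ) (hq : q ∈ Set.Ioo (0 : ℝ) 1) (a : ℝ) (ha : 0 < a) (m : ℕ) :
    Summable (fun n : {n : Fin (m + 1) → ℕ // Antitone n} => lhsTerm12 q a m n.1) ∧
    Summable (fun j : ℕ => q ^ (((m : ℝ) + a) * j) / (1 - q ^ (j + m + 1))) ∧
    ∑' n : {n : Fin (m + 1) → ℕ // Antitone n}, lhsTerm12 q a m n.1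
      = 1 / (qPR q q m * qPR q (q ^ a) m) *
          ∑' j : ℕ, q ^ (((m : ℝ) + a) * j) / (1 - q ^ (j + m + 1)) := by
  obtain ⟨hq0, hq1⟩ := hq
  have hq0' := hq0.le
  have hq1' := hq1.le
  set w : ℝ := q ^ ((m : ℝ) + a) with hw
  have hw0 : 0 < w := Real.rpow_pos_of_pos hq0 _
  have hw1 : w < 1 := Real.rpow_lt_one hq0' hq1 (by positivity)
  obtain ⟨hFsum, hGsum, hFG⟩ := lemF hq0 hq1 hw0.le hw1 m
  -- rewriting the j-term
  have hjterm : ∀ j : ℕ, q ^ (((m : ℝ) + a) * j) / (1 - q ^ (j + m + 1))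
      = w ^ j / (1 - q ^ (j+m+1)) := by
    intro j
    rw [hw, ← Real.rpow_natCast (q ^ ((m:ℝ) + a)) j, ← Real.rpow_mul hq0']
  -- basic positivity
  have hrp : ∀ x : ℝ, 0 < x → (0 < q ^ x ∧ q ^ x < 1) := fun x hx =>
    ⟨Real.rpow_pos_of_pos hq0 x, Real.rpow_lt_one hq0' hq1 hx⟩
  have hVpos : ∀ (k : ℕ) (t : Fin k → ℕ), 0 ≤ Vq q a k t := by
    intro k t
    apply div_nonneg (pow_nonneg hq0' _)
    apply (Finset.prod_pos ?_).le
    intro i _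
    have h := hrp ((t i : ℝ) + a + ((2 * (k - 1 - (i : ℕ)) : ℕ) : ℝ)) (by positivity)
    exact qPR_pos hq0' hq1' h.1.le h.2 2
  have hden : ∀ N : ℕ, 0 < 1 - q ^ ((N : ℝ) + a + ((2 * m : ℕ) : ℝ)) := by
    intro N
    have h := hrp ((N : ℝ) + a + ((2 * m : ℕ) : ℝ)) (by positivity)
    linarith [h.2]
  have hFnonneg : ∀ p : Σ N : ℕ, AT m N, 0 ≤ lhsTerm12 q a m (Fin.cons p.1 p.2.1) := by
    intro p
    rw [lhsTerm12_cons]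
    exact mul_nonneg (div_nonneg (pow_nonneg hq0' _) (hden p.1).le) (hVpos m p.2.1)
  -- fiber sums
  have hfiber : ∀ N : ℕ, ∑' t : AT m N, lhsTerm12 q a m (Fin.cons N t.1)
      = q ^ N / (1 - q ^ ((N : ℝ) + a + ((2 * m : ℕ) : ℝ))) * CSq q a m N := by
    intro N
    rw [← lemA hq0 hq1 ha m N, ← tsum_mul_left]
    exact tsum_congr fun t => lhsTerm12_cons q a m N t.1
  -- pointwise identity relating the fiber sum to the lemF series
  have hPm : (0:ℝ) < qPR q q m := qPR_pos hq0' hq1' hq0' hq1 m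
  have hAm : (0:ℝ) < qPR q (q ^ a) m :=
    qPR_pos hq0' hq1' (hrp a ha).1.le (hrp a ha).2 m
  have hpt : ∀ N : ℕ, q ^ N / (1 - q ^ ((N : ℝ) + a + ((2 * m : ℕ) : ℝ))) * CSq q a m N
      = 1 / (qPR q q m * qPR q (q ^ a) m)
          * (q ^ N * qPR q (q ^ (N+1)) m / qPR q (w * q ^ N) (m+1)) := by
    intro N
    have harg : w * q ^ N = q ^ ((N : ℝ) + a + (m : ℝ)) := by
      rw [hw, ← Real.rpow_natCast q N, ← Real.rpow_add hq0]
      congr 1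
      ring
    have harg2 : q ^ (m:ℕ) * q ^ ((N : ℝ) + a + (m:ℝ)) = q ^ ((N : ℝ) + a + ((2*m:ℕ):ℝ)) := by
      rw [← Real.rpow_natCast q m, ← Real.rpow_add hq0]
      congr 1
      push_cast
      ring
    have hsucc : qPR q (w * q ^ N) (m+1)
        = qPR q (q ^ ((N : ℝ) + a + (m:ℝ))) m * (1 - q ^ ((N : ℝ) + a + ((2*m:ℕ):ℝ))) := by
      rw [harg, qPR_succ, harg2]
    have h2 := hrp ((N : ℝ) + a + (m:ℝ)) (by positivity)
    have hDm : (0:ℝ) < qPR q (q ^ ((N : ℝ) + a + (m:ℝ))) m :=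
      qPR_pos hq0' hq1' h2.1.le h2.2 m
    have hd := hden N
    rw [hsucc, CSq]
    field_simp
  -- summability of the fiber-sum sequence
  have hgsummable : Summable (fun N : ℕ =>
      q ^ N / (1 - q ^ ((N : ℝ) + a + ((2 * m : ℕ) : ℝ))) * CSq q a m N) := by
    apply ((hFsum.mul_left (1 / (qPR q q m * qPR q (q ^ a) m)))).congr
    intro N
    exact (hpt N).symm
  -- summability over the sigma type
  have hsigma : Summable (fun p : Σ N : ℕ, AT m N => lhsTerm12 q a m (Fin.cons p.1 p.2.1)) := by
    apply (summable_sigma_of_nonneg hFnonneg).2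
    constructor
    · intro N
      exact Summable.of_finite
    · apply hgsummable.congr
      intro N
      exact (hfiber N).symm
  -- summability over the subtype
  have hsub : Summable (fun n : {n : Fin (m + 1) → ℕ // Antitone n} => lhsTerm12 q a m n.1) := by
    rw [← (eMain m).symm.summable_iff]
    apply hsigma.congr
    intro p
    simp only [Function.comp]
    rw [eMain_symm_apply]
  refine ⟨hsub, ?_, ?_⟩
  · apply hGsum.congr
    intro j
    exact (hjterm j).symm
  · calc ∑' n : {n : Fin (m + 1) → ℕ // Antitone n}, lhsTerm12 q a m n.1
        = ∑' p : Σ N : ℕ, AT m N, lhsTerm12 q a m (Fin.cons p.1 p.2.1) := by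
          rw [← Equiv.tsum_eq (eMain m).symm
            (fun n : {n : Fin (m + 1) → ℕ // Antitone n} => lhsTerm12 q a m n.1)]
          exact tsum_congr fun p => by rw [eMain_symm_apply]
      _ = ∑' N : ℕ, ∑' t : AT m N, lhsTerm12 q a m (Fin.cons N t.1) := Summable.tsum_sigma hsigma
      _ = ∑' N : ℕ, 1 / (qPR q q m * qPR q (q ^ a) m)
            * (q ^ N * qPR q (q ^ (N+1)) m / qPR q (w * q ^ N) (m+1)) :=
          tsum_congr fun N => by rw [hfiber N, hpt N]
      _ = 1 / (qPR q q m * qPR q (q ^ a) m)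
            * ∑' N : ℕ, q ^ N * qPR q (q ^ (N+1)) m / qPR q (w * q ^ N) (m+1) := tsum_mul_left
      _ = 1 / (qPR q q m * qPR q (q ^ a) m) * ∑' j : ℕ, w ^ j / (1 - q ^ (j+m+1)) := by rw [hFG]
      _ = 1 / (qPR q q m * qPR q (q ^ a) m) *
            ∑' j : ℕ, q ^ (((m : ℝ) + a) * j) / (1 - q ^ (j + m + 1)) := by
          congr 1
          exact tsum_congr fun j => (hjterm j).symm
end

section
/- For every q ∈ (0,1), every m ∈ ℕ, and all positive reals c_0, c_1, …, c_m: (1/(1−q)^m) · Σ over all (m+1)-tuples of natural numbers 0 ≤ j_0 ≤ j_1 ≤ … ≤ j_m < ∞ of q^{c_0 j_0 + c_1 j_1 + … + c_m j_m} (1−q^{j_1−j_0})(1−q^{j_2−j_1})⋯(1−q^{j_m−j_{m−1}}) = q^{c_1 + 2c_2 + … + m·c_m} / [ (q^{c_0+c_1+…+c_m};q)_1 (q^{c_1+c_2+…+c_m};q)_2 (q^{c_2+…+c_m};q)_2 ⋯ (q^{c_m};q)_2 ], with the series converging absolutely. -/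
open scoped BigOperators

/-- The summand of the left-hand side of Statement 13, for a monotone tuple
`j_0 ≤ j_1 ≤ … ≤ j_m`:
`q^{c_0 j_0 + … + c_m j_m} (1−q^{j_1−j_0})(1−q^{j_2−j_1})⋯(1−q^{j_m−j_{m−1}})`. -/
noncomputable def lhsTerm13 (q : ℝ) (m : ℕ) (c : ℕ → ℝ) (j : Fin (m + 1) → ℕ) : ℝ :=
  q ^ (∑ i : Fin (m + 1), c (i : ℕ) * (j i : ℝ)) *
    ∏ i : Fin m, (1 - q ^ (j i.succ - j i.castSucc))

section Aux

lemma pi_tsum : ∀ {n : ℕ} (f : Fin n → ℕ → ℝ), (∀ i k, 0 ≤ f i k) → (∀ i, Summable (f i)) →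
    Summable (fun k : Fin n → ℕ => ∏ i, f i (k i)) ∧
      (∑' k : Fin n → ℕ, ∏ i, f i (k i)) = ∏ i, ∑' x, f i x := by
  intro n
  induction n with
  | zero =>
    intro f _ _
    refine ⟨Summable.of_finite, ?_⟩
    simp [tsum_fintype]
  | succ n ih =>
    intro f h0 hs
    obtain ⟨ihS, ihT⟩ := ih (fun i => f i.succ) (fun i k => h0 _ _) (fun i => hs _)
    set G : (Fin n → ℕ) → ℝ := fun g => ∏ i : Fin n, f i.succ (g i) with hG
    have hprod : Summable (fun p : ℕ × (Fin n → ℕ) => f 0 p.1 * G p.2) :=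
      (hs 0).mul_of_nonneg ihS (fun k => h0 0 k) (fun g => Finset.prod_nonneg fun i _ => h0 _ _)
    set e : ℕ × (Fin n → ℕ) ≃ (Fin (n+1) → ℕ) := Fin.consEquiv (fun _ => ℕ) with he
    have hcomp : ∀ p : ℕ × (Fin n → ℕ), (∏ i, f i ((e p) i)) = f 0 p.1 * G p.2 := by
      intro p
      rw [Fin.prod_univ_succ]
      simp [he, hG, Fin.consEquiv]
    have hS : Summable (fun k : Fin n.succ → ℕ => ∏ i, f i (k i)) := by
      rw [← e.summable_iff]
      exact hprod.congr fun p => (hcomp p).symm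
    refine ⟨hS, ?_⟩
    rw [← e.tsum_eq]
    calc (∑' p : ℕ × (Fin n → ℕ), ∏ i, f i ((e p) i))
        = ∑' p : ℕ × (Fin n → ℕ), f 0 p.1 * G p.2 := tsum_congr hcomp
      _ = ∑' a : ℕ, ∑' g : Fin n → ℕ, f 0 a * G g :=
          Summable.tsum_prod' (f := fun p : ℕ × (Fin n → ℕ) => f 0 p.1 * G p.2) hprod
            (fun a => ihS.mul_left (f 0 a))
      _ = ∑' a : ℕ, f 0 a * ∑' g, G g := by simp_rw [tsum_mul_left]
      _ = (∑' a, f 0 a) * ∑' g, G g := tsum_mul_right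
      _ = ∏ i, ∑' x, f i x := by rw [ihT, Fin.prod_univ_succ]

variable {m : ℕ}

lemma fin_Iic_succ (i : Fin m) :
    Finset.Iic (i.succ : Fin (m+1)) = insert i.succ (Finset.Iic i.castSucc) := by
  ext t
  simp only [Finset.mem_Iic, Finset.mem_insert, Fin.le_def, Fin.ext_iff, Fin.val_succ,
    Fin.coe_castSucc]
  omega

lemma fin_Iic_zero : (Finset.Iic (0 : Fin (m+1))) = {0} := by
  ext t
  simp only [Finset.mem_Iic, Finset.mem_singleton, Fin.le_def, Fin.ext_iff, Fin.val_zero]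
  omega

/-- Partial sums of a tuple, producing a monotone tuple. -/
def sfun (k : Fin (m+1) → ℕ) : Fin (m+1) → ℕ := fun i => ∑ t ∈ Finset.Iic i, k t

lemma sfun_mono (k : Fin (m+1) → ℕ) : Monotone (sfun k) := fun _ _ hab =>
  Finset.sum_le_sum_of_subset (Finset.Iic_subset_Iic.mpr hab)

lemma sfun_zero (k : Fin (m+1) → ℕ) : sfun k 0 = k 0 := by simp [sfun, fin_Iic_zero]

lemma sfun_succ (k : Fin (m+1) → ℕ) (i : Fin m) :
    sfun k i.succ = k i.succ + sfun k i.castSucc := by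
  rw [sfun, fin_Iic_succ, Finset.sum_insert]
  · rfl
  · simp only [Finset.mem_Iic, Fin.le_def, Fin.val_succ, Fin.coe_castSucc]
    omega

/-- Successive differences of a tuple. -/
def dfun (j : Fin (m+1) → ℕ) : Fin (m+1) → ℕ :=
  fun i => Fin.cases (j 0) (fun t => j t.succ - j t.castSucc) i

/-- Tuples of naturals are equivalent to monotone tuples, via partial sums. -/
def monoEquiv (m : ℕ) : (Fin (m+1) → ℕ) ≃ {j : Fin (m+1) → ℕ // Monotone j} where
  toFun k := ⟨sfun k, sfun_mono k⟩
  invFun j := dfun j.1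
  left_inv k := by
    funext i
    induction i using Fin.cases with
    | zero => simpa [dfun] using sfun_zero k
    | succ t =>
      simp only [dfun, Fin.cases_succ, sfun_succ]
      omega
  right_inv j := by
    refine Subtype.ext (funext fun i => ?_)
    induction i using Fin.induction with
    | zero =>
      show sfun (dfun j.1) 0 = j.1 0
      simpa [dfun] using sfun_zero (dfun j.1)
    | succ t ih =>
      show sfun (dfun j.1) t.succ = j.1 t.succ
      rw [sfun_succ]
      replace ih : sfun (dfun j.1) t.castSucc = j.1 t.castSucc := ih
      rw [ih]
      simp only [dfun, Fin.cases_succ]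
      exact Nat.sub_add_cancel (j.2 (Fin.castSucc_le_succ t))

lemma sum_Ici_fin (c : ℕ → ℝ) (t : Fin (m+1)) :
    ∑ i ∈ Finset.Ici t, c (i : ℕ) = ∑ n ∈ Finset.Icc (t : ℕ) m, c n := by
  rw [show Finset.Icc (t : ℕ) m = (Finset.Ici t).map Fin.valEmbedding by
    rw [Fin.map_valEmbedding_Ici]; norm_num [Finset.Ico_add_one_right_eq_Icc], Finset.sum_map]
  rfl

lemma exp_swap (c : ℕ → ℝ) (k : Fin (m+1) → ℕ) :
    ∑ i : Fin (m+1), c (i : ℕ) * (sfun k i : ℝ)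
      = ∑ t : Fin (m+1), (∑ n ∈ Finset.Icc (t : ℕ) m, c n) * (k t : ℝ) := by
  have h1 : ∀ i : Fin (m+1), c (i : ℕ) * (sfun k i : ℝ)
      = ∑ t ∈ Finset.Iic i, c (i : ℕ) * (k t : ℝ) := by
    intro i; rw [sfun]; push_cast; rw [Finset.mul_sum]
  rw [Finset.sum_congr rfl fun i _ => h1 i]
  rw [Finset.sum_comm' (t' := Finset.univ) (s' := fun t => Finset.Ici t) (by simp)]
  refine Finset.sum_congr rfl fun t _ => ?_
  rw [← Finset.sum_mul, sum_Ici_fin]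

lemma prod_Icc_fin (F : ℕ → ℝ) : ∏ i ∈ Finset.Icc 1 m, F i = ∏ i : Fin m, F ((i : ℕ) + 1) := by
  rw [← Finset.Ico_add_one_right_eq_Icc, Finset.prod_Ico_eq_prod_range]
  rw [Fin.prod_univ_eq_prod_range (fun i => F (i + 1)) m]
  simp [add_comm]

lemma sum_Icc_fin (F : ℕ → ℝ) : ∑ i ∈ Finset.Icc 1 m, F i = ∑ i : Fin m, F ((i : ℕ) + 1) := by
  rw [← Finset.Ico_add_one_right_eq_Icc, Finset.sum_Ico_eq_sum_range]
  rw [Fin.sum_univ_eq_sum_range (fun i => F (i + 1)) m]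
  simp [add_comm]

lemma numer_exp (c : ℕ → ℝ) :
    ∑ i ∈ Finset.range (m+1), (i : ℝ) * c i
      = ∑ i ∈ Finset.Icc 1 m, ∑ n ∈ Finset.Icc i m, c n := by
  have h1 : ∀ i ∈ Finset.Icc 1 m, ∑ n ∈ Finset.Icc i m, c n
      = ∑ n ∈ Finset.range (m+1), if i ≤ n then c n else 0 := by
    intro i _
    rw [Finset.sum_ite, Finset.sum_const_zero, add_zero]
    refine Finset.sum_congr ?_ fun _ _ => rfl
    ext n
    simp only [Finset.mem_Icc, Finset.mem_filter, Finset.mem_range]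
    omega
  rw [Finset.sum_congr rfl h1, Finset.sum_comm]
  refine Finset.sum_congr rfl fun n hn => ?_
  simp only [Finset.mem_range] at hn
  have h2 : (Finset.Icc 1 m).filter (fun i => i ≤ n) = Finset.Icc 1 n := by
    ext i; simp only [Finset.mem_filter, Finset.mem_Icc]; omega
  rw [Finset.sum_ite, Finset.sum_const_zero, add_zero, h2, Finset.sum_const, Nat.card_Icc]
  simp [nsmul_eq_mul, mul_comm]

end Aux

/-- For `q ∈ (0,1)`, `m ∈ ℕ`, positive reals `c_0, …, c_m`:
`(1/(1−q)^m) Σ_{0 ≤ j_0 ≤ … ≤ j_m} q^{c_0 j_0+…+c_m j_m} (1−q^{j_1−j_0})⋯(1−q^{j_m−j_{m−1}})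
 = q^{c_1+2c_2+…+m c_m} / [(q^{c_0+…+c_m};q)_1 (q^{c_1+…+c_m};q)_2 ⋯ (q^{c_m};q)_2]`,
with the series converging absolutely. -/
theorem statement13 (q : ℝ) (hq : q ∈ Set.Ioo (0 : ℝ) 1) (m : ℕ)
    (c : ℕ → ℝ) (hc : ∀ i, i ≤ m → 0 < c i) :
    Summable (fun j : {j : Fin (m + 1) → ℕ // Monotone j} => lhsTerm13 q m c j.1) ∧
    (1 / (1 - q) ^ m) * ∑' j : {j : Fin (m + 1) → ℕ // Monotone j}, lhsTerm13 q m c j.1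
      = q ^ (∑ i ∈ Finset.range (m + 1), (i : ℝ) * c i) /
          (qPR q (q ^ (∑ t ∈ Finset.Icc 0 m, c t)) 1 *
            ∏ i ∈ Finset.Icc 1 m, qPR q (q ^ (∑ t ∈ Finset.Icc i m, c t)) 2) := by
  obtain ⟨hq0, hq1⟩ := hq
  set b : ℕ → ℝ := fun n => ∑ t ∈ Finset.Icc n m, c t with hb
  set Q : ℕ → ℝ := fun n => q ^ b n with hQdef
  have hbpos : ∀ n, n ≤ m → 0 < b n := fun n hn =>
    Finset.sum_pos (fun t ht => hc t (Finset.mem_Icc.mp ht).2)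
      ⟨n, Finset.mem_Icc.mpr ⟨le_refl n, hn⟩⟩
  have hQpos : ∀ n, 0 < Q n := fun n => Real.rpow_pos_of_pos hq0 _
  have hQlt : ∀ n, n ≤ m → Q n < 1 := fun n hn =>
    Real.rpow_lt_one hq0.le hq1 (hbpos n hn)
  set f : Fin (m+1) → ℕ → ℝ :=
    fun i x => Q (i : ℕ) ^ x * (if i = 0 then 1 else 1 - q ^ x) with hf
  have hle1 : ∀ x : ℕ, q ^ x ≤ 1 := fun x => pow_le_one₀ hq0.le hq1.le
  have h0 : ∀ i x, 0 ≤ f i x := by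
    intro i x
    refine mul_nonneg (pow_nonneg (hQpos _).le _) ?_
    split
    · norm_num
    · linarith [hle1 x]
  have him : ∀ i : Fin (m+1), (i : ℕ) ≤ m := fun i => Nat.lt_succ_iff.mp i.isLt
  have hgeom : ∀ i : Fin (m+1), Summable (fun x : ℕ => Q (i : ℕ) ^ x) := fun i =>
    summable_geometric_of_lt_one (hQpos _).le (hQlt _ (him i))
  have hgeom2 : ∀ i : Fin (m+1), Summable (fun x : ℕ => (Q (i : ℕ) * q) ^ x) := fun i =>
    summable_geometric_of_lt_one (mul_nonneg (hQpos _).le hq0.le)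
      (by nlinarith [hQpos (i : ℕ), hQlt (i : ℕ) (him i)])
  have hfsub : ∀ i : Fin (m+1), i ≠ 0 → ∀ x : ℕ,
      f i x = Q (i : ℕ) ^ x - (Q (i : ℕ) * q) ^ x := by
    intro i hi x
    simp only [hf, if_neg hi, mul_pow]
    ring
  have hfS : ∀ i : Fin (m+1), Summable (f i) := by
    intro i
    by_cases hi : i = 0
    · subst hi
      exact (hgeom 0).congr fun x => by simp [hf]
    · exact ((hgeom i).sub (hgeom2 i)).congr fun x => (hfsub i hi x).symm
  -- tsum of each factor
  have ht0 : (∑' x, f 0 x) = (1 - Q 0)⁻¹ := by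
    rw [tsum_congr (fun x : ℕ => by simp [hf] : ∀ x : ℕ, f 0 x = Q 0 ^ x)]
    exact tsum_geometric_of_lt_one (hQpos 0).le (hQlt 0 (Nat.zero_le m))
  have hti : ∀ i : Fin (m+1), i ≠ 0 →
      (∑' x, f i x) = Q (i : ℕ) * (1 - q) / ((1 - Q (i : ℕ)) * (1 - q * Q (i : ℕ))) := by
    intro i hi
    rw [tsum_congr (hfsub i hi), Summable.tsum_sub (hgeom i) (hgeom2 i),
      tsum_geometric_of_lt_one (hQpos _).le (hQlt _ (him i)),
      tsum_geometric_of_lt_one (mul_nonneg (hQpos _).le hq0.le)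
        (by nlinarith [hQpos (i : ℕ), hQlt (i : ℕ) (him i)])]
    have h1 : 1 - Q (i : ℕ) ≠ 0 := by have := hQlt _ (him i); intro h; linarith
    have h2 : 1 - Q (i : ℕ) * q ≠ 0 := by
      have := hQpos (i : ℕ); have := hQlt _ (him i); nlinarith
    have h2' : 1 - q * Q (i : ℕ) ≠ 0 := by rw [mul_comm] at h2; exact h2
    rw [inv_sub_inv h1 h2, div_eq_div_iff (mul_ne_zero h1 h2) (mul_ne_zero h1 h2')]
    ring
  -- the term identity
  have hterm : ∀ k : Fin (m+1) → ℕ, lhsTerm13 q m c (sfun k) = ∏ i, f i (k i) := by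
    intro k
    rw [lhsTerm13]
    have hd : ∀ i : Fin m, sfun k i.succ - sfun k i.castSucc = k i.succ := by
      intro i; rw [sfun_succ]; omega
    have e1 : q ^ (∑ i : Fin (m+1), c (i : ℕ) * (sfun k i : ℝ))
        = ∏ t : Fin (m+1), Q (t : ℕ) ^ (k t) := by
      rw [exp_swap, Real.rpow_sum_of_pos hq0]
      refine Finset.prod_congr rfl fun t _ => ?_
      rw [show ((∑ n ∈ Finset.Icc (t : ℕ) m, c n) * (k t : ℝ)) = b (t : ℕ) * (k t : ℝ) from rfl,
        Real.rpow_mul hq0.le, Real.rpow_natCast]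
    have e2 : (∏ i : Fin m, (1 - q ^ (sfun k i.succ - sfun k i.castSucc)))
        = ∏ i : Fin m, (1 - q ^ (k i.succ)) :=
      Finset.prod_congr rfl fun i _ => by rw [hd i]
    rw [e1, e2]
    rw [Fin.prod_univ_succ (fun i => f i (k i)), Fin.prod_univ_succ (fun t => Q (t : ℕ) ^ k t)]
    have hf0 : f 0 (k 0) = Q 0 ^ k 0 := by simp [hf]
    have hfsucc : ∀ i : Fin m, f i.succ (k i.succ)
        = Q (i.succ : ℕ) ^ (k i.succ) * (1 - q ^ (k i.succ)) := by
      intro i; simp [hf, Fin.succ_ne_zero]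
    rw [hf0, Finset.prod_congr rfl fun i _ => hfsucc i, Finset.prod_mul_distrib]
    simp only [Fin.val_zero]
    ring
  obtain ⟨hS, hT⟩ := pi_tsum f h0 hfS
  have hsum : Summable (fun j : {j : Fin (m + 1) → ℕ // Monotone j} => lhsTerm13 q m c j.1) := by
    rw [← Equiv.summable_iff (monoEquiv m)]
    exact hS.congr fun k => (hterm k).symm
  refine ⟨hsum, ?_⟩
  have hts : (∑' j : {j : Fin (m + 1) → ℕ // Monotone j}, lhsTerm13 q m c j.1)
      = ∏ i, ∑' x, f i x := by
    rw [← Equiv.tsum_eq (monoEquiv m) (fun j => lhsTerm13 q m c j.1)]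
    exact (tsum_congr fun k => hterm k).trans hT
  rw [hts]
  -- now pure algebra
  have hq1ne : (1 : ℝ) - q ≠ 0 := by linarith
  have h1ne : ∀ n, n ≤ m → (1 : ℝ) - Q n ≠ 0 := by
    intro n hn; have := hQlt n hn; intro h; linarith
  have h2ne : ∀ n, n ≤ m → (1 : ℝ) - q * Q n ≠ 0 := by
    intro n hn; have := hQpos n; have := hQlt n hn; nlinarith
  set P : ℝ := ∏ i : Fin m, Q ((i : ℕ) + 1) with hP
  set D : ℝ := ∏ i : Fin m, ((1 - Q ((i : ℕ) + 1)) * (1 - q * Q ((i : ℕ) + 1))) with hD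
  have hfin : ∀ i : Fin m, (i : ℕ) + 1 ≤ m := fun i => i.isLt
  have hDne : D ≠ 0 := Finset.prod_ne_zero_iff.mpr fun i _ =>
    mul_ne_zero (h1ne _ (hfin i)) (h2ne _ (hfin i))
  -- LHS product
  have hLHS : (∏ i, ∑' x, f i x) = (1 - Q 0)⁻¹ * ((1 - q) ^ m * P / D) := by
    rw [Fin.prod_univ_succ (fun i => ∑' x, f i x), ht0]
    congr 1
    rw [Finset.prod_congr rfl fun (i : Fin m) _ => hti i.succ (Fin.succ_ne_zero i)]
    simp only [Fin.val_succ]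
    rw [Finset.prod_div_distrib, Finset.prod_mul_distrib, Finset.prod_const,
      Finset.card_univ, Fintype.card_fin]
    rw [hP, hD, mul_comm]
  rw [hLHS]
  -- RHS
  have hqPR1 : qPR q (q ^ (∑ t ∈ Finset.Icc 0 m, c t)) 1 = 1 - Q 0 := by
    simp [qPR, hQdef, hb]
  have hqPR2 : (∏ i ∈ Finset.Icc 1 m, qPR q (q ^ (∑ t ∈ Finset.Icc i m, c t)) 2) = D := by
    have : ∀ i, qPR q (q ^ (∑ t ∈ Finset.Icc i m, c t)) 2 = (1 - Q i) * (1 - q * Q i) := by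
      intro i
      simp [qPR, Finset.prod_range_succ, hQdef, hb]
    rw [Finset.prod_congr rfl fun i _ => this i, prod_Icc_fin (fun i => (1 - Q i) * (1 - q * Q i))]
  have hnum : q ^ (∑ i ∈ Finset.range (m + 1), (i : ℝ) * c i) = P := by
    rw [numer_exp c, Real.rpow_sum_of_pos hq0, prod_Icc_fin (fun i => q ^ b i)]
  rw [hqPR1, hqPR2, hnum]
  have hQ0 := h1ne 0 (Nat.zero_le m)
  have hpow : ((1 : ℝ) - q) ^ m ≠ 0 := pow_ne_zero _ hq1ne
  field_simp
end
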